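/- arXiv:1808.04220 — 5 statements merged into one kernel-verified Lean document; each statement's English description precedes it below -/
import Mathlib

section
/- Let d ≥ 3 and m ≥ 3, and let G be the graph on m + d vertices consisting of an m-cycle on m of the vertices together with d further vertices each adjacent to all other m + d − 1 vertices. Then τ₀(G) = (m−3)/((d+3)(d+2)) + 1/(m+d+1) + 1/((d+1)·C(d+m+1, d+1)) − 1/(d+4) − 1/((d+1)·C(d+4, 3)). (G is the 1-skeleton of the d-sphere C_m ∗ ∂Δ_{d−1}, the join of an m-gon with the boundary of a (d−1)-simplex, so this computes τ₀ = τ_{d−1} of that sphere.) -/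
open Finset

/-- `τ₀` of a finite simple graph. -/
noncomputable def tau0 {V : Type*} [Fintype V] (G : SimpleGraph V) : ℚ :=
  ((Fintype.card V : ℚ) + 1)⁻¹ *
    ∑ W : Finset V,
      (if W.Nonempty then (Nat.card (G.induce (↑W : Set V)).ConnectedComponent : ℚ) - 1 else 0) /
        ((Fintype.card V).choose W.card : ℚ)

/-- The graph on `m + d` vertices consisting of an `m`-cycle on the first `m` vertices
together with `d` further vertices each adjacent to all other vertices
(the 1-skeleton of the `d`-sphere `C_m ∗ ∂Δ_{d−1}`). -/
def cycleJoinGraph (m d : ℕ) : SimpleGraph (Fin (m + d)) :=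
  SimpleGraph.fromRel (fun u v =>
    ((u : ℕ) < m ∧ (v : ℕ) < m ∧ ((u : ℕ) + 1) % m = (v : ℕ)) ∨ m ≤ (u : ℕ))

namespace CJ
variable {m d : ℕ}

def nxt (m d : ℕ) (v : Fin (m + d)) : Fin (m + d) :=
  if h : 0 < m then ⟨((v : ℕ) + 1) % m, lt_of_lt_of_le (Nat.mod_lt _ h) (Nat.le_add_right m d)⟩
  else v

lemma nxt_val (hm : 0 < m) (v : Fin (m + d)) : ((nxt m d v : Fin (m+d)) : ℕ) = ((v : ℕ) + 1) % m := by
  simp [nxt, hm]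

lemma nxt_lt (hm : 0 < m) (v : Fin (m + d)) : ((nxt m d v : Fin (m+d)) : ℕ) < m := by
  rw [nxt_val hm]; exact Nat.mod_lt _ hm

lemma nxt_iterate (hm : 0 < m) (v : Fin (m + d)) (hv : (v : ℕ) < m) (i : ℕ) :
    (((nxt m d)^[i] v : Fin (m+d)) : ℕ) = ((v : ℕ) + i) % m := by
  induction i with
  | zero => simp [Nat.mod_eq_of_lt hv]
  | succ i ih =>
      rw [Function.iterate_succ_apply', nxt_val hm, ih, Nat.mod_add_mod, Nat.add_assoc]

lemma nxt_iterate_lt (hm : 0 < m) (v : Fin (m + d)) (hv : (v : ℕ) < m) (i : ℕ) :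
    (((nxt m d)^[i] v : Fin (m+d)) : ℕ) < m := by
  rw [nxt_iterate hm v hv i]; exact Nat.mod_lt _ hm

lemma nxt_ne (hm : 2 ≤ m) (v : Fin (m + d)) (hv : (v : ℕ) < m) : nxt m d v ≠ v := by
  intro h
  have h1 : ((v : ℕ) + 1) % m = (v : ℕ) := by rw [← nxt_val (by omega) v, h]
  rcases lt_or_ge ((v : ℕ) + 1) m with h2 | h2
  · rw [Nat.mod_eq_of_lt h2] at h1; omega
  · have h3 : (v : ℕ) + 1 = m := by omega
    rw [h3, Nat.mod_self] at h1; omega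

lemma adj_nxt (hm : 2 ≤ m) (v : Fin (m + d)) (hv : (v : ℕ) < m) :
    (cycleJoinGraph m d).Adj v (nxt m d v) := by
  rw [cycleJoinGraph, SimpleGraph.fromRel_adj]
  refine ⟨(nxt_ne hm v hv).symm, Or.inl (Or.inl ⟨hv, nxt_lt (by omega) v, (nxt_val (by omega) v).symm⟩)⟩

lemma reach_iterate (hm : 2 ≤ m) (W : Finset (Fin (m + d))) (v : Fin (m + d))
    (hvm : (v : ℕ) < m) (i : ℕ) (hall : ∀ j ≤ i, (nxt m d)^[j] v ∈ W) :
    ((cycleJoinGraph m d).induce (↑W : Set (Fin (m + d)))).Reachable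
      ⟨v, Finset.mem_coe.mpr (by simpa using hall 0 (Nat.zero_le _))⟩
      ⟨(nxt m d)^[i] v, Finset.mem_coe.mpr (hall i le_rfl)⟩ := by
  induction i with
  | zero => rfl
  | succ i ih =>
      refine (ih fun j hj => hall j (hj.trans (Nat.le_succ _))).trans ?_
      refine SimpleGraph.Adj.reachable ?_
      have hlt : (((nxt m d)^[i] v : Fin (m+d)) : ℕ) < m := nxt_iterate_lt (by omega) v hvm i
      have : (nxt m d)^[i+1] v = nxt m d ((nxt m d)^[i] v) := Function.iterate_succ_apply' _ _ _
      simp only [SimpleGraph.comap_adj, Function.Embedding.coe_subtype, this]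
      exact adj_nxt hm _ hlt


lemma induce_adj' {W : Set (Fin (m+d))} {a b : W} :
    ((cycleJoinGraph m d).induce W).Adj a b ↔ (cycleJoinGraph m d).Adj a b := by
  simp [SimpleGraph.comap]

lemma card_cc_of_connected {V : Type*} {G : SimpleGraph V} (h : G.Connected) :
    Nat.card G.ConnectedComponent = 1 := by
  have h1 := h.preconnected.subsingleton_connectedComponent
  have h2 : Nonempty G.ConnectedComponent := ⟨G.connectedComponentMk h.nonempty.some⟩
  exact Nat.card_eq_one_iff_unique.mpr ⟨h1, h2⟩

/-- connectivity when an apex vertex is present -/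
lemma conn_of_apex {W : Finset (Fin (m+d))} {u : Fin (m+d)} (hu : u ∈ W) (hum : m ≤ (u:ℕ)) :
    ((cycleJoinGraph m d).induce (↑W : Set (Fin (m+d)))).Connected := by
  rw [SimpleGraph.connected_iff_exists_forall_reachable]
  refine ⟨⟨u, hu⟩, ?_⟩
  rintro ⟨v, hv⟩
  by_cases h : v = u
  · subst h; rfl
  · refine SimpleGraph.Adj.reachable ?_
    rw [induce_adj', cycleJoinGraph, SimpleGraph.fromRel_adj]
    exact ⟨by simpa using fun hh => h hh.symm, Or.inl (Or.inr hum)⟩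

/-- connectivity of the full cycle -/
lemma conn_cycle (hm : 2 ≤ m) :
    ((cycleJoinGraph m d).induce
      (↑(Finset.univ.filter (fun v : Fin (m+d) => (v:ℕ) < m)) : Set (Fin (m+d)))).Connected := by
  set W := Finset.univ.filter (fun v : Fin (m+d) => (v:ℕ) < m) with hW
  have h0 : (0 : ℕ) < m + d := by omega
  have hv0 : (⟨0, h0⟩ : Fin (m+d)) ∈ W := by simp [hW]; omega
  rw [SimpleGraph.connected_iff_exists_forall_reachable]
  refine ⟨⟨⟨0, h0⟩, hv0⟩, ?_⟩
  rintro ⟨w, hw⟩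
  have hwm : (w : ℕ) < m := by simpa [hW] using hw
  have hiter : (nxt m d)^[(w : ℕ)] ⟨0, h0⟩ = w := by
    apply Fin.ext
    rw [nxt_iterate (by omega) _ (by simpa using (by omega : (0:ℕ) < m)) _]
    simpa using Nat.mod_eq_of_lt hwm
  have hall : ∀ j ≤ (w : ℕ), (nxt m d)^[j] ⟨0, h0⟩ ∈ W := by
    intro j hj
    simp only [hW, Finset.mem_filter, Finset.mem_univ, true_and]
    exact nxt_iterate_lt (by omega) _ (by simpa using (by omega : (0:ℕ) < m)) j
  have := reach_iterate hm W ⟨0, h0⟩ (by simpa using (by omega : (0:ℕ) < m)) (w : ℕ) hall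
  convert this using 2
  exact hiter.symm

/-- number of connected components for a proper nonempty subset of the cycle -/
lemma card_cc_proper (hm : 2 ≤ m) (W : Finset (Fin (m+d))) (hWC : ∀ v ∈ W, (v:ℕ) < m)
    (g : Fin (m+d)) (hg : (g:ℕ) < m) (hgW : g ∉ W) :
    Nat.card ((cycleJoinGraph m d).induce (↑W : Set (Fin (m+d)))).ConnectedComponent
      = (W.filter (fun v => nxt m d v ∉ W)).card := by
  have hm0 : 0 < m := by omega
  -- existence of an exit
  have hex : ∀ v ∈ W, ∃ i, (nxt m d)^[i+1] v ∉ W := by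
    intro v hv
    have hvm := hWC v hv
    refine ⟨(g:ℕ) + m - (v:ℕ) - 1, ?_⟩
    have h1 : ((g:ℕ) + m - (v:ℕ) - 1) + 1 = (g:ℕ) + m - (v:ℕ) := by omega
    rw [h1]
    have : (nxt m d)^[(g:ℕ) + m - (v:ℕ)] v = g := by
      apply Fin.ext
      rw [nxt_iterate hm0 v hvm]
      have : (v:ℕ) + ((g:ℕ) + m - (v:ℕ)) = (g:ℕ) + m := by omega
      rw [this, Nat.add_mod_right, Nat.mod_eq_of_lt hg]
    rw [this]; exact hgW
  -- iterates up to the find stay inside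
  have mem_le : ∀ (v : Fin (m+d)) (hv : v ∈ W) (j : ℕ), j ≤ Nat.find (hex v hv) →
      (nxt m d)^[j] v ∈ W := by
    intro v hv j hj
    match j with
    | 0 => simpa using hv
    | j+1 =>
        by_contra hcon
        exact absurd (Nat.find_min (hex v hv) (by omega) hcon) (by simp)
  -- end of the arc
  set f : (↑W : Set (Fin (m+d))) → Fin (m+d) :=
    fun x => (nxt m d)^[Nat.find (hex x.1 (Finset.mem_coe.mp x.2))] x.1 with hf
  -- invariance under one forward step
  have step : ∀ (v : Fin (m+d)) (hv : v ∈ W) (hw : nxt m d v ∈ W),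
      (nxt m d)^[Nat.find (hex (nxt m d v) hw)] (nxt m d v)
        = (nxt m d)^[Nat.find (hex v hv)] v := by
    intro v hv hw
    have h1 : Nat.find (hex v hv) ≠ 0 := by
      intro h0
      have := Nat.find_spec (hex v hv)
      rw [h0] at this
      exact this (by simpa using hw)
    obtain ⟨K, hK⟩ : ∃ K, Nat.find (hex v hv) = K + 1 :=
      ⟨Nat.find (hex v hv) - 1, by omega⟩
    have h2 : Nat.find (hex (nxt m d v) hw) = K := by
      rw [Nat.find_eq_iff]
      constructor
      · have hs := Nat.find_spec (hex v hv)
        rw [hK] at hs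
        rw [← Function.iterate_succ_apply]
        exact hs
      · intro j hj hspec
        rw [← Function.iterate_succ_apply] at hspec
        exact absurd (Nat.find_min (hex v hv) (by omega) hspec) (by simp)
    rw [h2, hK, ← Function.iterate_succ_apply]
  -- invariance under adjacency
  have fadj : ∀ (a b : (↑W : Set (Fin (m+d)))),
      ((cycleJoinGraph m d).induce (↑W : Set (Fin (m+d)))).Adj a b → f a = f b := by
    rintro ⟨a, ha⟩ ⟨b, hb⟩ hab
    have haW : a ∈ W := Finset.mem_coe.mp ha
    have hbW : b ∈ W := Finset.mem_coe.mp hb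
    have ham : (a : ℕ) < m := hWC a haW
    have hbm : (b : ℕ) < m := hWC b hbW
    have hab' : (cycleJoinGraph m d).Adj a b := by simpa [induce_adj'] using hab
    rw [cycleJoinGraph, SimpleGraph.fromRel_adj] at hab'
    obtain ⟨hne, hor⟩ := hab'
    have hcase : b = nxt m d a ∨ a = nxt m d b := by
      rcases hor with (⟨_, _, h⟩ | h) | (⟨_, _, h⟩ | h)
      · exact Or.inl (Fin.ext (by rw [nxt_val hm0]; exact h.symm))
      · omega
      · exact Or.inr (Fin.ext (by rw [nxt_val hm0]; exact h.symm))
      · omega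
    rcases hcase with h | h
    · simp only [hf]
      subst h
      exact (step a haW hbW).symm
    · simp only [hf]
      subst h
      exact step b hbW haW
  have fwalk : ∀ (a b : (↑W : Set (Fin (m+d)))),
      ((cycleJoinGraph m d).induce (↑W : Set (Fin (m+d)))).Walk a b → f a = f b := by
    intro a b p
    induction p with
    | nil => rfl
    | cons h _ ih => exact (fadj _ _ h).trans ih
  -- ends are fixed points of f
  have fend : ∀ (e : Fin (m+d)) (he : e ∈ W), nxt m d e ∉ W →
      Nat.find (hex e he) = 0 := by
    intro e he hne
    rw [Nat.find_eq_zero]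
    simpa using hne
  -- the bijection
  set E := W.filter (fun v => nxt m d v ∉ W) with hE
  set Φ : {e // e ∈ E} → ((cycleJoinGraph m d).induce (↑W : Set (Fin (m+d)))).ConnectedComponent :=
    fun e => ((cycleJoinGraph m d).induce (↑W : Set (Fin (m+d)))).connectedComponentMk
      ⟨e.1, Finset.mem_coe.mpr (Finset.mem_filter.mp e.2).1⟩ with hΦ
  have hinj : Function.Injective Φ := by
    rintro ⟨e1, he1⟩ ⟨e2, he2⟩ h
    obtain ⟨he1W, he1n⟩ := Finset.mem_filter.mp he1
    obtain ⟨he2W, he2n⟩ := Finset.mem_filter.mp he2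
    rw [hΦ] at h
    simp only [SimpleGraph.ConnectedComponent.eq] at h
    obtain ⟨p⟩ := h
    have := fwalk _ _ p
    simp only [hf, fend e1 he1W (by simpa using he1n), fend e2 he2W (by simpa using he2n),
      Function.iterate_zero, id] at this
    exact Subtype.ext this
  have hsurj : Function.Surjective Φ := by
    intro c
    induction c using SimpleGraph.ConnectedComponent.ind with
    | _ x =>
      obtain ⟨v, hv⟩ := x
      have hvW : v ∈ W := Finset.mem_coe.mp hv
      have hvm : (v:ℕ) < m := hWC v hvW
      set i := Nat.find (hex v hvW) with hi
      have heW : (nxt m d)^[i] v ∈ W := mem_le v hvW i le_rfl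
      have heE : (nxt m d)^[i] v ∈ E := by
        rw [hE, Finset.mem_filter]
        refine ⟨heW, ?_⟩
        have hs := Nat.find_spec (hex v hvW)
        rwa [Function.iterate_succ_apply' (nxt m d) i v] at hs
      refine ⟨⟨(nxt m d)^[i] v, heE⟩, ?_⟩
      rw [hΦ]
      apply SimpleGraph.ConnectedComponent.sound
      exact (reach_iterate hm W v hvm i (fun j hj => mem_le v hvW j hj)).symm
  have : Nat.card ((cycleJoinGraph m d).induce (↑W : Set (Fin (m+d)))).ConnectedComponent
      = Nat.card {e // e ∈ E} := (Nat.card_congr (Equiv.ofBijective Φ ⟨hinj, hsurj⟩)).symm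
  rw [this, Nat.card_eq_fintype_card, Fintype.card_coe]

end CJ

lemma choose_prod_eq (n a K : ℕ) (ha : a ≤ n) (hK : K ≤ n) :
    n.choose K * (n - K).choose (n - a) = n.choose a * a.choose K := by
  rcases le_or_gt K a with h | h
  · rw [Nat.choose_mul h]
    congr 1
    rw [← Nat.choose_symm (Nat.sub_le_sub_left h n)]
    congr 1
    omega
  · have h1 : a.choose K = 0 := Nat.choose_eq_zero_of_lt h
    have h2 : (n - K).choose (n - a) = 0 := Nat.choose_eq_zero_of_lt (by omega)
    rw [h1, h2, Nat.mul_zero, Nat.mul_zero]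

lemma key_sum (n a : ℕ) (ha : a ≤ n) :
    ∀ K, K ≤ n + 1 →
      ∑ k ∈ range K, (a.choose k : ℚ) / (n.choose k : ℚ)
        = (((n+1).choose (n - a + 1) : ℚ) - ((n + 1 - K).choose (n - a + 1) : ℚ))
            / (n.choose a : ℚ) := by
  intro K
  induction K with
  | zero => simp
  | succ K ih =>
      intro hK
      have hK' : K ≤ n := by omega
      rw [sum_range_succ, ih (by omega)]
      have hna : n.choose a ≠ 0 := (Nat.choose_pos ha).ne'
      have hnK : n.choose K ≠ 0 := (Nat.choose_pos hK').ne'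
      have hpascal : (n + 1 - K).choose (n - a + 1)
          = (n - K).choose (n - a) + (n - K).choose (n - a + 1) := by
        have : n + 1 - K = (n - K) + 1 := by omega
        rw [this, Nat.choose_succ_succ]
      have hstep : (a.choose K : ℚ) / (n.choose K : ℚ)
          = ((n - K).choose (n - a) : ℚ) / (n.choose a : ℚ) := by
        rw [div_eq_div_iff (by exact_mod_cast hnK) (by exact_mod_cast hna)]
        have h := congrArg (fun x : ℕ => (x : ℚ)) (choose_prod_eq n a K ha hK')
        push_cast at h
        linarith [h]
      rw [hstep, hpascal]
      have h1 : n + 1 - (K+1) = n - K := by omega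
      rw [h1]
      push_cast
      ring

lemma key_sum2 (n a K : ℕ) (ha : a + 1 ≤ n) (hK : K ≤ n) :
    ∑ j ∈ range K, (a.choose j : ℚ) / (n.choose (j+1) : ℚ)
      = (((n+1).choose (n - a) : ℚ) - ((n - K).choose (n - a) : ℚ)) / (n.choose (a+1) : ℚ)
        - (((n+1).choose (n - a + 1) : ℚ) - ((n - K).choose (n - a + 1) : ℚ))
            / (n.choose a : ℚ) := by
  have h1 : ∑ k ∈ range (K+1), (((a+1).choose k : ℚ) - (a.choose k : ℚ)) / (n.choose k : ℚ)
      = ∑ j ∈ range K, (a.choose j : ℚ) / (n.choose (j+1) : ℚ) := by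
    rw [Finset.sum_range_succ']
    simp only [Nat.choose_zero_right, Nat.cast_one, sub_self, zero_div, add_zero]
    refine Finset.sum_congr rfl fun j _ => ?_
    push_cast [Nat.choose_succ_succ a j]
    ring
  rw [← h1]
  have h2 : ∑ k ∈ range (K+1), (((a+1).choose k : ℚ) - (a.choose k : ℚ)) / (n.choose k : ℚ)
      = (∑ k ∈ range (K+1), ((a+1).choose k : ℚ) / (n.choose k : ℚ))
        - ∑ k ∈ range (K+1), ((a.choose k : ℚ)) / (n.choose k : ℚ) := by
    rw [← Finset.sum_sub_distrib]
    refine Finset.sum_congr rfl fun k _ => ?_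
    ring
  rw [h2, key_sum n (a+1) ha (K+1) (by omega), key_sum n a (by omega) (K+1) (by omega)]
  have e1 : n - (a+1) + 1 = n - a := by omega
  have e2 : n + 1 - (K+1) = n - K := by omega
  rw [e1, e2]

namespace CJ
variable {m d : ℕ}

/-- the cycle part of the vertex set -/
def Cyc (m d : ℕ) : Finset (Fin (m + d)) := Finset.univ.filter (fun v => (v : ℕ) < m)

lemma card_Cyc (hm : 0 < m) : (Cyc m d).card = m := by
  apply Finset.card_eq_of_bijective (fun i hi => ⟨i, by omega⟩)
  · intro a ha
    have : (a : ℕ) < m := by simpa [Cyc] using ha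
    exact ⟨(a : ℕ), this, Fin.ext rfl⟩
  · intro i hi
    simp [Cyc]
    omega
  · intro i j hi hj hij
    simpa using congrArg Fin.val hij

lemma mem_Cyc {v : Fin (m + d)} : v ∈ Cyc m d ↔ (v : ℕ) < m := by simp [Cyc]

noncomputable def Fterm (m d : ℕ) (W : Finset (Fin (m + d))) : ℚ :=
  (if W.Nonempty
      then (Nat.card ((cycleJoinGraph m d).induce (↑W : Set (Fin (m+d)))).ConnectedComponent : ℚ) - 1
      else 0) / ((m + d).choose W.card : ℚ)

lemma sum_Fterm_eq (hm : 3 ≤ m) :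
    ∑ W : Finset (Fin (m + d)), Fterm m d W = ∑ W ∈ (Cyc m d).powerset, Fterm m d W := by
  symm
  apply Finset.sum_subset (Finset.subset_univ _)
  intro W _ hW
  rw [Finset.mem_powerset] at hW
  obtain ⟨u, huW, huC⟩ := Finset.not_subset.mp hW
  have hum : m ≤ (u : ℕ) := by simpa [mem_Cyc] using huC
  have h1 : Nat.card ((cycleJoinGraph m d).induce (↑W : Set (Fin (m+d)))).ConnectedComponent = 1 :=
    card_cc_of_connected (conn_of_apex huW hum)
  rw [Fterm, if_pos ⟨u, huW⟩, h1]
  simp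

lemma Fterm_eq_of_subset (hm : 3 ≤ m) {W : Finset (Fin (m + d))} (hW : W ⊆ Cyc m d) :
    Fterm m d W
      = ((W.filter (fun v => nxt m d v ∉ W)).card : ℚ) / ((m + d).choose W.card : ℚ)
        - (if W.Nonempty then (1:ℚ) else 0) / ((m + d).choose W.card : ℚ)
        + (if W = Cyc m d then (1:ℚ) else 0) / ((m + d).choose W.card : ℚ) := by
  have hm0 : 0 < m := by omega
  rcases eq_or_ne W (Cyc m d) with rfl | hWne
  · have h1 : Nat.card ((cycleJoinGraph m d).induce
        (↑(Cyc m d) : Set (Fin (m+d)))).ConnectedComponent = 1 :=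
      card_cc_of_connected (conn_cycle (by omega))
    have hne : (Cyc m d).Nonempty := ⟨⟨0, by omega⟩, by simp [mem_Cyc]; omega⟩
    have hends : (Cyc m d).filter (fun v => nxt m d v ∉ Cyc m d) = ∅ := by
      apply Finset.filter_false_of_mem
      intro v hv
      simp only [not_not]
      exact mem_Cyc.mpr (nxt_lt hm0 v)
    rw [Fterm, if_pos hne, h1, if_pos hne, if_pos rfl, hends]
    simp
  · rcases W.eq_empty_or_nonempty with rfl | hne
    · simp [Fterm, hWne]
    · obtain ⟨g, hgC, hgW⟩ : ∃ g ∈ Cyc m d, g ∉ W := by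
        by_contra hcon
        push_neg at hcon
        exact hWne (Finset.Subset.antisymm hW hcon)
      have h1 := card_cc_proper (m := m) (d := d) (by omega) W
        (fun v hv => mem_Cyc.mp (hW hv)) g (mem_Cyc.mp hgC) hgW
      rw [Fterm, if_pos hne, h1, if_pos hne, if_neg hWne]
      ring
end CJ

namespace CJ
variable {m d : ℕ}

lemma sum_ite_cyc (hm : 3 ≤ m) :
    ∑ W ∈ (Cyc m d).powerset,
        (if W = Cyc m d then (1:ℚ) else 0) / ((m + d).choose W.card : ℚ)
      = 1 / ((m + d).choose m : ℚ) := by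
  rw [Finset.sum_eq_single_of_mem (Cyc m d) (Finset.mem_powerset_self _)]
  · rw [if_pos rfl, card_Cyc (by omega)]
  · intro W _ hne
    rw [if_neg hne, zero_div]

lemma sum_ite_nonempty (hm : 3 ≤ m) :
    ∑ W ∈ (Cyc m d).powerset,
        (if W.Nonempty then (1:ℚ) else 0) / ((m + d).choose W.card : ℚ)
      = (∑ j ∈ Finset.range (m+1), ((m).choose j : ℚ) * (1 / ((m+d).choose j : ℚ))) - 1 := by
  have h1 : ∀ W ∈ (Cyc m d).powerset,
      (if W.Nonempty then (1:ℚ) else 0) / ((m + d).choose W.card : ℚ)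
        = 1 / ((m + d).choose W.card : ℚ) - (if W = ∅ then (1:ℚ) else 0) := by
    intro W _
    rcases W.eq_empty_or_nonempty with rfl | hne
    · simp
    · rw [if_pos hne, if_neg (Finset.nonempty_iff_ne_empty.mp hne), sub_zero]
  rw [Finset.sum_congr rfl h1, Finset.sum_sub_distrib]
  have h2 : ∑ W ∈ (Cyc m d).powerset, (if W = ∅ then (1:ℚ) else 0) = 1 := by
    rw [Finset.sum_eq_single_of_mem ∅ (Finset.empty_mem_powerset _)]
    · simp
    · intro W _ hne; rw [if_neg hne]
  rw [h2]
  congr 1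
  have h3 := Finset.sum_powerset_apply_card (fun j => 1 / ((m+d).choose j : ℚ)) (x := Cyc m d)
  rw [card_Cyc (by omega : 0 < m)] at h3
  rw [h3]
  refine Finset.sum_congr rfl fun j _ => ?_
  rw [nsmul_eq_mul]

lemma sum_ends (hm : 3 ≤ m) :
    ∑ W ∈ (Cyc m d).powerset,
        ((W.filter (fun v => nxt m d v ∉ W)).card : ℚ) / ((m + d).choose W.card : ℚ)
      = (m : ℚ) * ∑ j ∈ Finset.range (m-1), ((m-2).choose j : ℚ) * (1 / ((m+d).choose (j+1) : ℚ)) := by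
  have hm0 : 0 < m := by omega
  -- rewrite ends as a sum over Cyc
  have h1 : ∀ W ∈ (Cyc m d).powerset,
      ((W.filter (fun v => nxt m d v ∉ W)).card : ℚ) / ((m + d).choose W.card : ℚ)
        = ∑ v ∈ Cyc m d,
            (if v ∈ W ∧ nxt m d v ∉ W then (1:ℚ) / ((m + d).choose W.card : ℚ) else 0) := by
    intro W hW
    rw [Finset.mem_powerset] at hW
    have e1 : W.filter (fun v => nxt m d v ∉ W)
        = (Cyc m d).filter (fun v => v ∈ W ∧ nxt m d v ∉ W) := by
      ext v
      simp only [Finset.mem_filter]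
      constructor
      · rintro ⟨h1, h2⟩; exact ⟨hW h1, h1, h2⟩
      · rintro ⟨_, h1, h2⟩; exact ⟨h1, h2⟩
    rw [e1, Finset.card_filter]
    push_cast
    rw [Finset.sum_div]
    refine Finset.sum_congr rfl fun v _ => ?_
    split_ifs <;> simp
  rw [Finset.sum_congr rfl h1, Finset.sum_comm]
  -- each vertex contributes the same amount
  have h2 : ∀ v ∈ Cyc m d,
      ∑ W ∈ (Cyc m d).powerset,
          (if v ∈ W ∧ nxt m d v ∉ W then (1:ℚ) / ((m + d).choose W.card : ℚ) else 0)
        = ∑ j ∈ Finset.range (m-1), ((m-2).choose j : ℚ) * (1 / ((m+d).choose (j+1) : ℚ)) := by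
    intro v hv
    have hvm : (v : ℕ) < m := mem_Cyc.mp hv
    have hnv : nxt m d v ∈ Cyc m d := mem_Cyc.mpr (nxt_lt hm0 v)
    have hne : nxt m d v ≠ v := nxt_ne (by omega) v hvm
    set C' := ((Cyc m d).erase v).erase (nxt m d v) with hC'
    have hcard : C'.card = m - 2 := by
      rw [hC', Finset.card_erase_of_mem (Finset.mem_erase_of_ne_of_mem hne hnv),
        Finset.card_erase_of_mem hv, card_Cyc hm0]
      omega
    rw [← Finset.sum_filter]
    have h3 : ∑ W ∈ (Cyc m d).powerset with v ∈ W ∧ nxt m d v ∉ W,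
        (1:ℚ) / ((m + d).choose W.card : ℚ)
        = ∑ U ∈ C'.powerset, (1:ℚ) / ((m + d).choose (U.card + 1) : ℚ) := by
      apply Finset.sum_nbij' (fun W => W.erase v) (fun U => insert v U)
      · intro W hW
        simp only [Finset.mem_filter, Finset.mem_powerset] at hW
        obtain ⟨hWC, hvW, hnW⟩ := hW
        rw [Finset.mem_powerset, hC']
        intro x hx
        rw [Finset.mem_erase] at hx
        refine Finset.mem_erase_of_ne_of_mem ?_ (Finset.mem_erase_of_ne_of_mem hx.1 (hWC hx.2))
        intro hcon
        exact hnW (hcon ▸ hx.2)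
      · intro U hU
        rw [Finset.mem_powerset] at hU
        have hvU : v ∉ U := fun hc => by
          have := hU hc
          rw [hC'] at this
          exact absurd (Finset.mem_of_mem_erase this) (by simp)
        simp only [Finset.mem_filter, Finset.mem_powerset]
        refine ⟨?_, Finset.mem_insert_self _ _, ?_⟩
        · intro x hx
          rcases Finset.mem_insert.mp hx with rfl | hx
          · exact hv
          · exact Finset.mem_of_mem_erase (Finset.mem_of_mem_erase (hU hx))
        · intro hc
          rcases Finset.mem_insert.mp hc with h | h
          · exact hne h
          · have := hU h
            rw [hC', Finset.mem_erase] at this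
            exact this.1 rfl
      · intro W hW
        simp only [Finset.mem_filter] at hW
        exact Finset.insert_erase hW.2.1
      · intro U hU
        rw [Finset.mem_powerset] at hU
        apply Finset.erase_insert
        intro hc
        have := hU hc
        rw [hC'] at this
        exact absurd (Finset.mem_of_mem_erase this) (by simp)
      · intro W hW
        simp only [Finset.mem_filter] at hW
        have hpos : 0 < W.card := Finset.card_pos.mpr ⟨v, hW.2.1⟩
        rw [Finset.card_erase_of_mem hW.2.1]
        have heq : W.card - 1 + 1 = W.card := by omega
        rw [heq]
    rw [h3]
    have h4 := Finset.sum_powerset_apply_card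
      (fun j => (1:ℚ) / ((m+d).choose (j+1) : ℚ)) (x := C')
    rw [hcard] at h4
    rw [h4, show m - 2 + 1 = m - 1 by omega]
    refine Finset.sum_congr rfl fun j _ => ?_
    rw [nsmul_eq_mul]
  rw [Finset.sum_congr rfl h2, Finset.sum_const, card_Cyc hm0, nsmul_eq_mul]

end CJ

set_option maxHeartbeats 1000000 in
/-- for `d ≥ 3` and `m ≥ 3`, the graph of `C_m ∗ ∂Δ_{d−1}` has
`τ₀ = (m−3)/((d+3)(d+2)) + 1/(m+d+1) + 1/((d+1)·C(d+m+1,d+1)) − 1/(d+4) − 1/((d+1)·C(d+4,3))`. -/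
theorem tau0_cycle_join (d m : ℕ) (hd : 3 ≤ d) (hm : 3 ≤ m) :
    tau0 (cycleJoinGraph m d)
      = ((m : ℚ) - 3) / (((d : ℚ) + 3) * ((d : ℚ) + 2))
        + 1 / ((m : ℚ) + (d : ℚ) + 1)
        + 1 / (((d : ℚ) + 1) * ((d + m + 1).choose (d + 1) : ℚ))
        - 1 / ((d : ℚ) + 4)
        - 1 / (((d : ℚ) + 1) * ((d + 4).choose 3 : ℚ)) := by
  obtain ⟨M, rfl⟩ : ∃ M, m = M + 3 := ⟨m - 3, by omega⟩
  obtain ⟨D, rfl⟩ : ∃ D, d = D + 3 := ⟨d - 3, by omega⟩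
  have hm' : 3 ≤ M + 3 := by omega
  set n : ℕ := M + 3 + (D + 3) with hn
  -- reduce tau0 to the sum of Fterm
  have htau : tau0 (cycleJoinGraph (M+3) (D+3))
      = ((n : ℚ) + 1)⁻¹ * ∑ W : Finset (Fin n), CJ.Fterm (M+3) (D+3) W := by
    rw [tau0]
    simp only [Fintype.card_fin, CJ.Fterm]
    rfl
  -- evaluate the sum of Fterm
  have e0 : ∑ W : Finset (Fin n), CJ.Fterm (M+3) (D+3) W
      = ((M+3 : ℕ) : ℚ)
            * ∑ j ∈ Finset.range (M+2), (((M+1).choose j : ℕ) : ℚ) * (1 / ((n.choose (j+1) : ℕ) : ℚ))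
        - ((∑ j ∈ Finset.range (M+4), (((M+3).choose j : ℕ) : ℚ) * (1 / ((n.choose j : ℕ) : ℚ))) - 1)
        + 1 / ((n.choose (M+3) : ℕ) : ℚ) := by
    rw [CJ.sum_Fterm_eq hm', Finset.sum_congr rfl
        (fun W hW => CJ.Fterm_eq_of_subset hm' (Finset.mem_powerset.mp hW)),
      Finset.sum_add_distrib, Finset.sum_sub_distrib, CJ.sum_ends hm', CJ.sum_ite_nonempty hm',
      CJ.sum_ite_cyc hm']
    simp only [show M + 3 - 2 = M + 1 from rfl]
    norm_num
    rfl
  -- closed forms for the two binomial sums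
  have eS2 : ∑ j ∈ Finset.range (M+2), (((M+1).choose j : ℕ) : ℚ) * (1 / ((n.choose (j+1) : ℕ) : ℚ))
      = (((n+1).choose (D+5) : ℚ) - ((D+4).choose (D+5) : ℚ)) / ((n.choose (M+2) : ℕ) : ℚ)
        - (((n+1).choose (D+6) : ℚ) - ((D+4).choose (D+6) : ℚ)) / ((n.choose (M+1) : ℕ) : ℚ) := by
    have h := key_sum2 n (M+1) (M+2) (by omega) (by omega)
    rw [show n - (M+1) = D + 5 by omega, show n - (M+2) = D + 4 by omega,
      show D + 5 + 1 = D + 6 by omega] at h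
    rw [← h]
    exact Finset.sum_congr rfl fun j _ => (mul_one_div _ _)
  have eS1 : ∑ j ∈ Finset.range (M+4), (((M+3).choose j : ℕ) : ℚ) * (1 / ((n.choose j : ℕ) : ℚ))
      = (((n+1).choose (D+4) : ℚ) - ((D+3).choose (D+4) : ℚ)) / ((n.choose (M+3) : ℕ) : ℚ) := by
    have h := key_sum n (M+3) (by omega) (M+4) (by omega)
    rw [show n - (M+3) + 1 = D + 4 by omega, show n + 1 - (M+4) = D + 3 by omega] at h
    rw [← h]
    exact Finset.sum_congr rfl fun j _ => (mul_one_div _ _)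
  -- vanish the small binomials
  have z1 : (D+4).choose (D+5) = 0 := Nat.choose_eq_zero_of_lt (by omega)
  have z2 : (D+4).choose (D+6) = 0 := Nat.choose_eq_zero_of_lt (by omega)
  have z3 : (D+3).choose (D+4) = 0 := Nat.choose_eq_zero_of_lt (by omega)
  -- symmetry of binomials
  have sym1 : n.choose (M+2) = n.choose (D+4) := by
    have h := Nat.choose_symm (show D+4 ≤ n by omega)
    rw [show n - (D+4) = M+2 by omega] at h
    exact h
  have sym2 : n.choose (M+1) = n.choose (D+5) := by
    have h := Nat.choose_symm (show D+5 ≤ n by omega)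
    rw [show n - (D+5) = M+1 by omega] at h
    exact h
  have sym3 : n.choose (M+3) = n.choose (D+3) := by
    have h := Nat.choose_symm (show D+3 ≤ n by omega)
    rw [show n - (D+3) = M+3 by omega] at h
    exact h
  rw [htau, e0, eS2, eS1, z1, z2, z3, sym1, sym2, sym3]
  -- names for the remaining binomials
  set x0 : ℚ := ((n+1).choose (D+4) : ℚ) with hx0
  set x1 : ℚ := ((n+1).choose (D+5) : ℚ) with hx1
  set x2 : ℚ := ((n+1).choose (D+6) : ℚ) with hx2
  set y0 : ℚ := (n.choose (D+3) : ℚ) with hy0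
  set y1 : ℚ := (n.choose (D+4) : ℚ) with hy1
  set y2 : ℚ := (n.choose (D+5) : ℚ) with hy2
  have hy0p : 0 < y0 := by rw [hy0]; exact_mod_cast Nat.choose_pos (by omega)
  have hy1p : 0 < y1 := by rw [hy1]; exact_mod_cast Nat.choose_pos (by omega)
  have hy2p : 0 < y2 := by rw [hy2]; exact_mod_cast Nat.choose_pos (by omega)
  have hx0p : 0 < x0 := by rw [hx0]; exact_mod_cast Nat.choose_pos (by omega)
  -- ratio relations
  have r0 : ((n : ℚ) + 1) * y0 = x0 * ((D : ℚ) + 4) := by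
    have h := Nat.add_one_mul_choose_eq n (D+3)
    rw [hx0, hy0]; exact_mod_cast h
  have r1 : ((n : ℚ) + 1) * y1 = x1 * ((D : ℚ) + 5) := by
    have h := Nat.add_one_mul_choose_eq n (D+4)
    rw [hx1, hy1]; exact_mod_cast h
  have r2 : ((n : ℚ) + 1) * y2 = x2 * ((D : ℚ) + 6) := by
    have h := Nat.add_one_mul_choose_eq n (D+5)
    rw [hx2, hy2]; exact_mod_cast h
  -- the RHS binomials
  have hrhs1 : (D + 3 + (M + 3) + 1).choose (D + 3 + 1) = (n+1).choose (D+4) := by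
    congr 1 <;> omega
  have h6 : (((D + 3 + 4).choose 3 : ℕ) : ℚ) * 6
      = ((D : ℚ) + 7) * (((D : ℚ) + 6) * ((D : ℚ) + 5)) := by
    have s1 := Nat.add_one_mul_choose_eq (D+5) 1
    have s2 := Nat.add_one_mul_choose_eq (D+6) 2
    rw [Nat.choose_one_right] at s1
    have s1' : ((D : ℚ) + 6) * ((D : ℚ) + 5) = ((D+6).choose 2 : ℚ) * 2 := by exact_mod_cast s1
    have s2' : ((D : ℚ) + 7) * ((D+6).choose 2 : ℚ) = ((D+7).choose 3 : ℚ) * 3 := by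
      exact_mod_cast s2
    rw [show D + 3 + 4 = D + 7 by omega]
    linear_combination (-2 : ℚ) * s2' - ((D : ℚ) + 7) * s1'
  rw [hrhs1]
  rw [← hx0]
  -- substitute the ratios
  have hx1e : x1 = ((n : ℚ) + 1) * y1 / ((D : ℚ) + 5) := by
    rw [eq_div_iff (by positivity)]; linarith [r1]
  have hx2e : x2 = ((n : ℚ) + 1) * y2 / ((D : ℚ) + 6) := by
    rw [eq_div_iff (by positivity)]; linarith [r2]
  have hy0e : y0 = x0 * ((D : ℚ) + 4) / ((n : ℚ) + 1) := by
    rw [eq_div_iff (by positivity)]; linarith [r0]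
  have hX3 : (((D + 3 + 4).choose 3 : ℕ) : ℚ)
      = ((D : ℚ) + 7) * (((D : ℚ) + 6) * ((D : ℚ) + 5)) / 6 := by
    rw [eq_div_iff (by norm_num)]; linarith [h6]
  rw [hx1e, hx2e, hy0e, hX3]
  have hnq : ((n : ℕ) : ℚ) = (M : ℚ) + (D : ℚ) + 6 := by rw [hn]; push_cast; ring
  rw [hnq]
  push_cast
  have hx0ne : x0 ≠ 0 := hx0p.ne'
  field_simp
  ring
end

section
/- Let d ≥ 1 and let C be a strongly connected pure d-dimensional simplicial complex on n vertices with f₁ edges, where C(n−1,2) + d + 1 ≤ f₁ < C(n,2). Let k be the largest integer with k ≤ n and C(k,2) + (n−k)·(d+1) ≤ f₁, and set j = f₁ − C(k,2) − (n−k−1)·(d+1). Then τ₀(C) ≤ 1/(n+1) − 1/(k+1) + 1/((j+1)(j+2)) + (n−k−1)/((d+2)(d+3)); that is, τ₀(C) is at most τ₀ of the Billera–Lee graph with parameters (n, f₁, d+1), which is the graph of the n-vertex Billera–Lee d-sphere with f₁ edges. (This proves the conjectured upper bound for τ₀ for nearly 2-neighborly triangulations, in particular for combinatorial d-manifolds with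 at most n−d−2 missing edges.) -/
open Finset

/-- The graph (1-skeleton) of a pure simplicial complex given by its family `F` of facets. -/
def complexGraph {V : Type*} (F : Finset (Finset V)) : SimpleGraph V :=
  SimpleGraph.fromRel (fun u v => ∃ S ∈ F, u ∈ S ∧ v ∈ S)

/-- The dual (adjacency) graph of a pure `d`-dimensional complex with facet family `F`. -/
def dualGraph {V : Type*} [DecidableEq V] (F : Finset (Finset V)) (d : ℕ) :
    SimpleGraph {S // S ∈ F} :=
  SimpleGraph.fromRel (fun S T => ((S : Finset V) ∩ (T : Finset V)).card = d)

section Aux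
open scoped Classical
set_option linter.unusedSectionVars false
variable {V : Type*} [Fintype V] [LinearOrder V]

noncomputable def PW (G : SimpleGraph V) (W : Finset V) (v : V) : Finset V :=
  W.filter (fun w => ∃ (hw : w ∈ W) (hv : v ∈ W),
    (G.induce (↑W : Set V)).Reachable ⟨w, hw⟩ ⟨v, hv⟩)

noncomputable def RW (G : SimpleGraph V) (W : Finset V) : Finset V :=
  W.filter (fun v => ∃ (hv : v ∈ W) (hne : W.Nonempty),
    (G.induce (↑W : Set V)).connectedComponentMk ⟨v, hv⟩ ≠
      (G.induce (↑W : Set V)).connectedComponentMk ⟨W.min' hne, W.min'_mem hne⟩ ∧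
    ∀ w (hw : w ∈ W), (G.induce (↑W : Set V)).Reachable ⟨w, hw⟩ ⟨v, hv⟩ → v ≤ w)

noncomputable def Phi (G : SimpleGraph V) (W : Finset V) (v : V) : Finset (Sym2 V) :=
  if h : W.Nonempty then
    ((W \ PW G W v).image fun b => s(v, b)) ∪
    (((PW G W v).erase v).image fun p => s(W.min' h, p))
  else ∅

variable (G : SimpleGraph V) {W : Finset V} {v : V}

lemma PW_subset : PW G W v ⊆ W := filter_subset _ _

lemma mem_PW_self (hv : v ∈ W) : v ∈ PW G W v := by
  simp only [PW, mem_filter]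
  exact ⟨hv, hv, hv, SimpleGraph.Reachable.refl _⟩

lemma not_adj_of_PW {p b : V} (hv : v ∈ W) (hp : p ∈ PW G W v)
    (hb : b ∈ W) (hb' : b ∉ PW G W v) : ¬ G.Adj p b := by
  intro hadj
  simp only [PW, mem_filter] at hp hb'
  obtain ⟨hpW, _, _, hreach⟩ := hp
  refine hb' ⟨hb, hb, hv, ?_⟩
  exact (SimpleGraph.Adj.reachable
    (by simpa using hadj.symm : (G.induce (↑W : Set V)).Adj ⟨b, hb⟩ ⟨p, hpW⟩)).trans hreach

lemma RW_subset : RW G W ⊆ W := filter_subset _ _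

lemma RW_empty_of_card_le_one (h : W.card ≤ 1) : RW G W = ∅ := by
  rw [eq_empty_iff_forall_notMem]
  intro v hv
  simp only [RW, mem_filter] at hv
  obtain ⟨hvW, hv', hne, hcc, _⟩ := hv
  have hcard : W = {v} := by
    refine (Finset.eq_singleton_iff_unique_mem).2 ⟨hvW, fun x hx => ?_⟩
    by_contra hxv
    exact absurd (Finset.one_lt_card.2 ⟨x, hx, v, hvW, hxv⟩) (by omega)
  have : W.min' hne = v := by simp [hcard]
  exact hcc (by rw [SimpleGraph.ConnectedComponent.eq]; exact (Subtype.ext this.symm : (⟨v, hv'⟩ : (↑W : Set V)) = ⟨W.min' hne, W.min'_mem hne⟩) ▸ SimpleGraph.Reachable.refl _)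

-- facts extracted from RW membership
lemma RW_spec (hv : v ∈ RW G W) :
    ∃ (hvW : v ∈ W) (hne : W.Nonempty),
      W.min' hne ∉ PW G W v ∧ v ≠ W.min' hne ∧ (∀ w ∈ PW G W v, v ≤ w) := by
  simp only [RW, mem_filter] at hv
  obtain ⟨hvW, hv', hne, hcc, hmin⟩ := hv
  refine ⟨hvW, hne, ?_, ?_, ?_⟩
  · intro hmem
    simp only [PW, mem_filter] at hmem
    obtain ⟨_, h1, h2, hreach⟩ := hmem
    exact hcc (SimpleGraph.ConnectedComponent.sound hreach).symm
  · intro h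
    exact hcc (by rw [SimpleGraph.ConnectedComponent.eq]; exact (Subtype.ext h : (⟨v, hv'⟩ : (↑W : Set V)) = ⟨W.min' hne, W.min'_mem hne⟩) ▸ SimpleGraph.Reachable.refl _)
  · intro w hw
    simp only [PW, mem_filter] at hw
    obtain ⟨hwW, h1, h2, hreach⟩ := hw
    exact hmin w hwW hreach

lemma Phi_subset (hv : v ∈ RW G W) : Phi G W v ⊆ Gᶜ.edgeFinset := by
  obtain ⟨hvW, hne, hmnP, hvm, hmin⟩ := RW_spec G hv
  intro e he
  rw [Phi, dif_pos hne] at he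
  rw [SimpleGraph.mem_edgeFinset]
  rcases Finset.mem_union.1 he with h | h
  · obtain ⟨b, hb, rfl⟩ := Finset.mem_image.1 h
    obtain ⟨hbW, hbP⟩ := Finset.mem_sdiff.1 hb
    rw [SimpleGraph.mem_edgeSet, SimpleGraph.compl_adj]
    exact ⟨fun h => hbP (h ▸ mem_PW_self G hvW),
      not_adj_of_PW G hvW (mem_PW_self G hvW) hbW hbP⟩
  · obtain ⟨p, hp, rfl⟩ := Finset.mem_image.1 h
    have hpP := Finset.mem_of_mem_erase hp
    have hpW := PW_subset G hpP
    rw [SimpleGraph.mem_edgeSet, SimpleGraph.compl_adj]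
    constructor
    · rintro rfl; exact hmnP hpP
    · intro h
      exact not_adj_of_PW G hvW hpP (W.min'_mem hne) hmnP h.symm

lemma card_Phi (hv : v ∈ RW G W) : (Phi G W v).card = W.card - 1 := by
  obtain ⟨hvW, hne, hmnP, hvm, hmin⟩ := RW_spec G hv
  rw [Phi, dif_pos hne]
  have hinj1 : Set.InjOn (fun b => s(v, b)) ↑(W \ PW G W v) := by
    intro a _ b _ hab
    simp only [Sym2.eq, Sym2.rel_iff', Prod.mk.injEq, Prod.swap_prod_mk] at hab
    rcases hab with ⟨_, h⟩ | ⟨h1, h2⟩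
    · exact h
    · rw [← h1, ← h2]
  have hinj2 : Set.InjOn (fun p => s(W.min' hne, p)) ↑((PW G W v).erase v) := by
    intro a _ b _ hab
    simp only [Sym2.eq, Sym2.rel_iff', Prod.mk.injEq, Prod.swap_prod_mk] at hab
    rcases hab with ⟨_, h⟩ | ⟨h1, h2⟩
    · exact h
    · rw [← h1, ← h2]
  have hdisj : Disjoint ((W \ PW G W v).image fun b => s(v, b))
      (((PW G W v).erase v).image fun p => s(W.min' hne, p)) := by
    rw [Finset.disjoint_left]
    rintro e h1 h2
    obtain ⟨b, hb, rfl⟩ := Finset.mem_image.1 h1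
    obtain ⟨p, hp, he⟩ := Finset.mem_image.1 h2
    obtain ⟨hbW, hbP⟩ := Finset.mem_sdiff.1 hb
    simp only [Sym2.eq, Sym2.rel_iff', Prod.mk.injEq, Prod.swap_prod_mk] at he
    rcases he with ⟨h1', h2'⟩ | ⟨h1', h2'⟩
    · exact hvm h1'.symm
    · exact (Finset.ne_of_mem_erase hp) h2'
  rw [Finset.card_union_of_disjoint hdisj, Finset.card_image_of_injOn hinj1,
    Finset.card_image_of_injOn hinj2, Finset.card_sdiff_of_subset (PW_subset G),
    Finset.card_erase_of_mem (mem_PW_self G hvW)]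
  have h1 : 1 ≤ (PW G W v).card := Finset.card_pos.2 ⟨v, mem_PW_self G hvW⟩
  have h2 : (PW G W v).card ≤ W.card := Finset.card_le_card (PW_subset G)
  have h3 : 1 ≤ W.card := Finset.card_pos.2 hne
  omega

lemma mem_iff_Phi (hv : v ∈ RW G W) (u : V) : u ∈ W ↔ ∃ e ∈ Phi G W v, u ∈ e := by
  obtain ⟨hvW, hne, hmnP, hvm, hmin⟩ := RW_spec G hv
  rw [Phi, dif_pos hne]
  constructor
  · intro hu
    by_cases huP : u ∈ PW G W v
    · by_cases huv : u = v
      · refine ⟨s(v, W.min' hne), ?_, by simp [huv]⟩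
        exact Finset.mem_union_left _ (Finset.mem_image_of_mem _
          (Finset.mem_sdiff.2 ⟨W.min'_mem hne, hmnP⟩))
      · refine ⟨s(W.min' hne, u), ?_, by simp⟩
        exact Finset.mem_union_right _ (Finset.mem_image_of_mem _
          (Finset.mem_erase.2 ⟨huv, huP⟩))
    · refine ⟨s(v, u), ?_, by simp⟩
      exact Finset.mem_union_left _ (Finset.mem_image_of_mem _
        (Finset.mem_sdiff.2 ⟨hu, huP⟩))
  · rintro ⟨e, he, hue⟩
    rcases Finset.mem_union.1 he with h | h
    · obtain ⟨b, hb, rfl⟩ := Finset.mem_image.1 h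
      rcases Sym2.mem_iff.1 hue with rfl | rfl
      · exact hvW
      · exact (Finset.mem_sdiff.1 hb).1
    · obtain ⟨p, hp, rfl⟩ := Finset.mem_image.1 h
      rcases Sym2.mem_iff.1 hue with rfl | rfl
      · exact W.min'_mem hne
      · exact PW_subset G (Finset.mem_of_mem_erase hp)

lemma mem_PW_iff_Phi (hv : v ∈ RW G W) (hne : W.Nonempty) (u : V) :
    u ∈ PW G W v ↔ s(W.min' hne, u) ∈ Phi G W v := by
  obtain ⟨hvW, hne', hmnP, hvm, hmin⟩ := RW_spec G hv
  rw [Phi, dif_pos hne]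
  constructor
  · intro huP
    by_cases huv : u = v
    · subst huv
      refine Finset.mem_union_left _ ?_
      have : s(W.min' hne, u) = s(u, W.min' hne) := Sym2.eq_swap
      rw [this]
      exact Finset.mem_image_of_mem _ (Finset.mem_sdiff.2 ⟨W.min'_mem hne, hmnP⟩)
    · exact Finset.mem_union_right _ (Finset.mem_image_of_mem _
        (Finset.mem_erase.2 ⟨huv, huP⟩))
  · intro he
    rcases Finset.mem_union.1 he with h | h
    · obtain ⟨b, hb, heq⟩ := Finset.mem_image.1 h
      obtain ⟨hbW, hbP⟩ := Finset.mem_sdiff.1 hb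
      simp only [Sym2.eq, Sym2.rel_iff', Prod.mk.injEq, Prod.swap_prod_mk] at heq
      rcases heq with ⟨h1, h2⟩ | ⟨h1, h2⟩
      · exact absurd h1 hvm
      · rw [← h1]; exact mem_PW_self G hvW
    · obtain ⟨p, hp, heq⟩ := Finset.mem_image.1 h
      simp only [Sym2.eq, Sym2.rel_iff', Prod.mk.injEq, Prod.swap_prod_mk] at heq
      rcases heq with ⟨h1, h2⟩ | ⟨h1, h2⟩
      · exact h2 ▸ Finset.mem_of_mem_erase hp
      · exact absurd (h2 ▸ Finset.mem_of_mem_erase hp) hmnP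

lemma Phi_inj {W W' : Finset V} {v v' : V} (hv : v ∈ RW G W) (hv' : v' ∈ RW G W')
    (heq : Phi G W v = Phi G W' v') : W = W' ∧ v = v' := by
  have hWW : W = W' := by
    ext u
    rw [mem_iff_Phi G hv u, mem_iff_Phi G hv' u, heq]
  subst hWW
  obtain ⟨hvW, hne, _, _, hmin⟩ := RW_spec G hv
  obtain ⟨hvW', _, _, _, hmin'⟩ := RW_spec G hv'
  have hPP : PW G W v = PW G W v' := by
    ext u
    rw [mem_PW_iff_Phi G hv hne u, mem_PW_iff_Phi G hv' hne u, heq]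
  refine ⟨rfl, le_antisymm ?_ ?_⟩
  · exact hmin v' (hPP ▸ mem_PW_self G hvW')
  · exact hmin' v (hPP.symm ▸ mem_PW_self G hvW)

noncomputable def QW (G : SimpleGraph V) (W : Finset V)
    (c : (G.induce (↑W : Set V)).ConnectedComponent) : Finset V :=
  W.filter (fun w => ∃ hw : w ∈ W, (G.induce (↑W : Set V)).connectedComponentMk ⟨w, hw⟩ = c)

lemma card_CC_le (hne : W.Nonempty) :
    Nat.card (G.induce (↑W : Set V)).ConnectedComponent ≤ (RW G W).card + 1 := by
  set CC := (G.induce (↑W : Set V)).ConnectedComponent with hCC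
  letI : Fintype CC := Fintype.ofFinite _
  set c₀ : CC := (G.induce (↑W : Set V)).connectedComponentMk
    ⟨W.min' hne, W.min'_mem hne⟩ with hc₀
  have hQne : ∀ c : CC, (QW G W c).Nonempty := by
    intro c
    obtain ⟨x, hx⟩ := c.exists_rep
    exact ⟨x.1, Finset.mem_filter.2 ⟨x.2, x.2, hx⟩⟩
  have hQmem : ∀ (c : CC), ∃ h : (QW G W c).min' (hQne c) ∈ W,
      (G.induce (↑W : Set V)).connectedComponentMk ⟨(QW G W c).min' (hQne c), h⟩ = c := by
    intro c
    have h := (QW G W c).min'_mem (hQne c)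
    simp only [QW, Finset.mem_filter] at h
    obtain ⟨h1, h2, h3⟩ := h
    exact ⟨h1, h3⟩
  have key : Fintype.card {c : CC // c ≠ c₀} ≤ (RW G W).card := by
    rw [← Fintype.card_coe (RW G W)]
    refine Fintype.card_le_of_injective
      (fun c => ⟨(QW G W c.1).min' (hQne c.1), ?_⟩) ?_
    · obtain ⟨hW, hc⟩ := hQmem c.1
      refine Finset.mem_filter.2 ⟨hW, hW, hne, ?_, ?_⟩
      · rw [hc]; exact c.2
      · intro w hw hreach
        have hwQ : w ∈ QW G W c.1 := by
          refine Finset.mem_filter.2 ⟨hw, hw, ?_⟩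
          rw [← hc]
          exact SimpleGraph.ConnectedComponent.sound hreach
        exact (QW G W c.1).min'_le w hwQ
    · intro c c' h
      simp only [Subtype.mk.injEq] at h
      obtain ⟨hW, hc⟩ := hQmem c.1
      obtain ⟨hW', hc'⟩ := hQmem c'.1
      apply Subtype.ext
      rw [← hc, ← hc']
      congr 1
      exact Subtype.ext h
  have h1 : Fintype.card {c : CC // c ≠ c₀} = Fintype.card CC - 1 := by
    have := Fintype.card_subtype_compl (fun c : CC => c = c₀)
    simpa [Fintype.card_subtype_eq] using this
  have h2 : 1 ≤ Fintype.card CC := Fintype.card_pos_iff.2 ⟨c₀⟩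
  rw [Nat.card_eq_fintype_card]
  omega

lemma sum_RW_card_le (s : ℕ) :
    ∑ W ∈ powersetCard s (univ : Finset V), (RW G W).card ≤
      (Gᶜ.edgeFinset.card).choose (s - 1) := by
  rw [← Finset.card_sigma]
  rw [← Finset.card_powersetCard (s-1) Gᶜ.edgeFinset]
  refine Finset.card_le_card_of_injOn (fun x => Phi G x.1 x.2) ?_ ?_
  · rintro ⟨W, v⟩ hx
    rw [Finset.mem_coe, Finset.mem_sigma] at hx
    obtain ⟨hW, hv⟩ := hx
    rw [Finset.mem_powersetCard] at hW
    rw [Finset.mem_coe, Finset.mem_powersetCard]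
    exact ⟨Phi_subset G hv, by rw [card_Phi G hv, hW.2]⟩
  · rintro ⟨W, v⟩ hx ⟨W', v'⟩ hx' h
    rw [Finset.mem_coe, Finset.mem_sigma] at hx hx'
    obtain ⟨h1, h2⟩ := Phi_inj G hx.2 hx'.2 h
    subst h1; subst h2; rfl
end Aux

lemma SId (m : ℕ) : ∀ (r q n : ℕ), n = m + r + q →
    ∑ t ∈ Finset.range (m+1), ((m.choose t : ℚ) / (n.choose (t+r) : ℚ)) =
      ((n : ℚ)+1) * ((r.factorial : ℚ) * (q.factorial : ℚ)) / ((r+q+1).factorial : ℚ) := by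
  induction m with
  | zero =>
    intro r q n hn
    subst hn
    simp only [Finset.sum_range_one, Nat.choose_zero_right, Nat.cast_one, Nat.zero_add]
    have hle : r ≤ 0 + r + q := by omega
    have h := Nat.choose_mul_factorial_mul_factorial hle
    have h2 : 0 + r + q - r = q := by omega
    rw [h2] at h
    have hc : ((0+r+q).choose r : ℚ) * (r.factorial : ℚ) * (q.factorial : ℚ)
        = ((0+r+q).factorial : ℚ) := by exact_mod_cast congrArg (Nat.cast (R := ℚ)) h
    have hfact : ((r+q+1).factorial : ℚ) = ((r+q+1) : ℚ) * ((r+q).factorial : ℚ) := by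
      rw [show r+q+1 = (r+q)+1 by ring, Nat.factorial_succ]; push_cast; ring
    have hne1 : ((0+r+q).choose r : ℚ) ≠ 0 := by
      have := Nat.choose_pos hle; positivity
    have hne2 : ((r+q).factorial : ℚ) ≠ 0 := by
      have := Nat.factorial_pos (r+q); positivity
    have hne3 : ((r:ℚ)+(q:ℚ)+1) ≠ 0 := by positivity
    rw [show (0:ℕ)+r+q = r+q by ring] at *
    field_simp [hfact]
    push_cast at hc ⊢
    nlinarith [hc]
  | succ m ih =>
    intro r q n hn
    rw [Finset.sum_range_succ']
    have e1 : ∀ i ∈ Finset.range (m+1),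
        (((m+1).choose (i+1) : ℚ) / (n.choose (i+1+r) : ℚ))
          = ((m.choose i : ℚ) / (n.choose (i+(r+1)) : ℚ))
            + ((m.choose (i+1) : ℚ) / (n.choose ((i+1)+r) : ℚ)) := by
      intro i _
      rw [Nat.choose_succ_succ]
      push_cast
      rw [show i+1+r = i+(r+1) by ring]
      ring
    rw [Finset.sum_congr rfl e1, Finset.sum_add_distrib]
    have IH1 := ih (r+1) q n (by omega)
    have IH2 := ih r (q+1) n (by omega)
    have e3 : (∑ i ∈ Finset.range (m+1), ((m.choose (i+1) : ℚ) / (n.choose ((i+1)+r) : ℚ)))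
        + (((m+1).choose 0 : ℚ) / (n.choose (0+r) : ℚ))
        = ∑ t ∈ Finset.range (m+2), ((m.choose t : ℚ) / (n.choose (t+r) : ℚ)) := by
      rw [Finset.sum_range_succ' (fun t => ((m.choose t : ℚ) / (n.choose (t+r) : ℚ))) (m+1)]
      norm_num
    have e4 : ∑ t ∈ Finset.range (m+2), ((m.choose t : ℚ) / (n.choose (t+r) : ℚ))
        = ∑ t ∈ Finset.range (m+1), ((m.choose t : ℚ) / (n.choose (t+r) : ℚ)) := by
      rw [Finset.sum_range_succ, Nat.choose_succ_self]
      norm_num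
    rw [add_assoc, e3, e4, IH1, IH2]
    have hf1 : (((r+1)+q+1).factorial : ℚ) = ((r+q+2) : ℚ) * ((r+q+1).factorial : ℚ) := by
      rw [show (r+1)+q+1 = (r+q+1)+1 by ring, Nat.factorial_succ]; push_cast; ring
    have hf2 : ((r+(q+1)+1).factorial : ℚ) = ((r+q+2) : ℚ) * ((r+q+1).factorial : ℚ) := by
      rw [show r+(q+1)+1 = (r+q+1)+1 by ring, Nat.factorial_succ]; push_cast; ring
    have hf3 : ((r+1).factorial : ℚ) = ((r:ℚ)+1) * (r.factorial : ℚ) := by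
      rw [Nat.factorial_succ]; push_cast; ring
    have hf4 : ((q+1).factorial : ℚ) = ((q:ℚ)+1) * (q.factorial : ℚ) := by
      rw [Nat.factorial_succ]; push_cast; ring
    have hne : ((r+q+1).factorial : ℚ) ≠ 0 := by
      have := Nat.factorial_pos (r+q+1); positivity
    rw [hf1, hf2, hf3, hf4]
    field_simp
    ring

lemma capSum (n m j : ℕ) (hm : n = m + 1 + j) :
    ∑ s ∈ Finset.range (n+1),
      ((if s ≤ 1 then (0:ℚ) else (m.choose (s-1) : ℚ)) / (n.choose s : ℚ))
    = ((n:ℚ)+1)/(((j:ℚ)+1)*((j:ℚ)+2)) - 1/(n:ℚ) := by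
  have e2 : ∑ t ∈ Finset.range (m+1), ((m.choose t : ℚ) / (n.choose (t+1) : ℚ))
      = ((n:ℚ)+1)/(((j:ℚ)+1)*((j:ℚ)+2)) := by
    rw [SId m 1 j n (by omega)]
    have : ((1+j+1).factorial : ℚ) = ((j:ℚ)+2)*(((j:ℚ)+1)) * (j.factorial : ℚ) := by
      rw [show 1+j+1 = (j+1)+1 by ring, Nat.factorial_succ, Nat.factorial_succ]
      push_cast; ring
    rw [this]
    have hj : (j.factorial : ℚ) ≠ 0 := by have := Nat.factorial_pos j; positivity
    have h1 : ((j:ℚ)+1) ≠ 0 := by positivity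
    have h2 : ((j:ℚ)+2) ≠ 0 := by positivity
    field_simp
    ring
  have e3 : ∑ t ∈ Finset.range (m+1), ((m.choose t : ℚ) / (n.choose (t+1) : ℚ))
      = 1/(n:ℚ) + ∑ i ∈ Finset.range m, ((m.choose (i+1) : ℚ) / (n.choose (i+1+1) : ℚ)) := by
    rw [Finset.sum_range_succ' (fun t => ((m.choose t : ℚ) / (n.choose (t+1) : ℚ))) m]
    norm_num [Nat.choose_one_right]
    ring
  obtain ⟨p, rfl⟩ : ∃ p, n = p+1 := ⟨n-1, by omega⟩
  rw [Finset.sum_range_succ', Finset.sum_range_succ']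
  have e0 : ∀ i ∈ Finset.range p,
      ((if i+1+1 ≤ 1 then (0:ℚ) else (m.choose (i+1+1-1) : ℚ)) / ((p+1).choose (i+1+1) : ℚ))
      = ((m.choose (i+1) : ℚ) / ((p+1).choose (i+1+1) : ℚ)) := by
    intro i _
    rw [if_neg (by omega), show i+1+1-1 = i+1 by omega]
  rw [Finset.sum_congr rfl e0]
  have e1 : ∑ i ∈ Finset.range p, ((m.choose (i+1) : ℚ) / ((p+1).choose (i+1+1) : ℚ))
      = ∑ i ∈ Finset.range m, ((m.choose (i+1) : ℚ) / ((p+1).choose (i+1+1) : ℚ)) := by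
    refine (Finset.sum_subset (Finset.range_subset_range.2 (by omega)) ?_).symm
    intro i _ hi
    rw [Finset.mem_range, not_lt] at hi
    rw [Nat.choose_eq_zero_of_lt (by omega)]
    norm_num
  rw [e1]
  have := e2.symm.trans e3
  simp only [if_pos (by norm_num : (0:ℕ) ≤ 1), if_pos (by norm_num : (1:ℕ) ≤ 1), zero_div,
    add_zero]
  linarith [this]

section Assemble
open scoped Classical
variable {V : Type*} [Fintype V] [LinearOrder V]

set_option linter.unusedSectionVars false in
lemma edgeFinset_card_ncard (H : SimpleGraph V) [Fintype H.edgeSet] :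
    H.edgeFinset.card = H.edgeSet.ncard := by
  rw [SimpleGraph.edgeFinset, Set.toFinset_card, ← Nat.card_eq_fintype_card,
    Nat.card_coe_set_eq]

set_option linter.unusedSectionVars false in
lemma term_le (G : SimpleGraph V) (W : Finset V) :
    (if W.Nonempty then ((Nat.card (G.induce (↑W : Set V)).ConnectedComponent : ℚ) - 1) else 0)
      ≤ ((RW G W).card : ℚ) := by
  split_ifs with h
  · have h1 := card_CC_le G h
    have h2 : ((Nat.card (G.induce (↑W : Set V)).ConnectedComponent : ℚ))
        ≤ ((RW G W).card : ℚ) + 1 := by exact_mod_cast h1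
    linarith
  · positivity

set_option linter.unusedSectionVars false in
lemma tau0_le_general (G : SimpleGraph V) (m j : ℕ)
    (hmcard : Gᶜ.edgeSet.ncard = m) (hnm : Fintype.card V = m + 1 + j) :
    tau0 G ≤ ((Fintype.card V : ℚ)+1)⁻¹ *
      (((Fintype.card V : ℚ)+1)/(((j:ℚ)+1)*((j:ℚ)+2)) - 1/(Fintype.card V : ℚ)) := by
  set n := Fintype.card V with hn
  rw [tau0]
  have hinv : (0:ℚ) ≤ ((n:ℚ)+1)⁻¹ := by positivity
  refine mul_le_mul_of_nonneg_left ?_ hinv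
  rw [← capSum n m j hnm]
  have hsplit : ∑ W : Finset V,
      ((if W.Nonempty then ((Nat.card (G.induce (↑W : Set V)).ConnectedComponent : ℚ) - 1) else 0)
        / (n.choose W.card : ℚ))
      = ∑ s ∈ Finset.range (n+1), ∑ W ∈ Finset.powersetCard s (Finset.univ : Finset V),
        ((if W.Nonempty then ((Nat.card (G.induce (↑W : Set V)).ConnectedComponent : ℚ) - 1) else 0)
          / (n.choose W.card : ℚ)) := by
    rw [← Finset.sum_fiberwise_of_maps_to (s := (Finset.univ : Finset (Finset V)))
      (t := Finset.range (n+1)) (g := Finset.card)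
      (fun W _ => Finset.mem_range.2 (Nat.lt_succ_of_le (Finset.card_le_univ W)))]
    refine Finset.sum_congr rfl (fun s _ => ?_)
    rw [Finset.powersetCard_eq_filter, Finset.powerset_univ]
  rw [hsplit]
  refine Finset.sum_le_sum ?_
  intro s hs
  rw [Finset.mem_range] at hs
  have hsn : s ≤ n := by omega
  have hpos : (0:ℚ) < (n.choose s : ℚ) := by
    exact_mod_cast Nat.choose_pos hsn
  have hcongr : ∀ W ∈ Finset.powersetCard s (Finset.univ : Finset V),
      ((if W.Nonempty then ((Nat.card (G.induce (↑W : Set V)).ConnectedComponent : ℚ) - 1) else 0)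
        / (n.choose W.card : ℚ))
      = ((if W.Nonempty then ((Nat.card (G.induce (↑W : Set V)).ConnectedComponent : ℚ) - 1) else 0)
        / (n.choose s : ℚ)) := by
    intro W hW
    rw [(Finset.mem_powersetCard.1 hW).2]
  rw [Finset.sum_congr rfl hcongr, ← Finset.sum_div]
  rw [div_le_div_iff_of_pos_right hpos]
  calc ∑ W ∈ Finset.powersetCard s (Finset.univ : Finset V),
        (if W.Nonempty then ((Nat.card (G.induce (↑W : Set V)).ConnectedComponent : ℚ) - 1) else 0)
      ≤ ∑ W ∈ Finset.powersetCard s (Finset.univ : Finset V), ((RW G W).card : ℚ) :=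
        Finset.sum_le_sum (fun W _ => term_le G W)
    _ = ((∑ W ∈ Finset.powersetCard s (Finset.univ : Finset V), (RW G W).card : ℕ) : ℚ) := by
        push_cast; ring
    _ ≤ (if s ≤ 1 then (0:ℚ) else (m.choose (s-1) : ℚ)) := by
        split_ifs with h1
        · have : ∀ W ∈ Finset.powersetCard s (Finset.univ : Finset V), (RW G W).card = 0 := by
            intro W hW
            have hc := (Finset.mem_powersetCard.1 hW).2
            rw [RW_empty_of_card_le_one G (by omega : W.card ≤ 1)]
            rfl
          rw [Finset.sum_congr rfl this]
          simp
        · have := sum_RW_card_le G s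
          rw [edgeFinset_card_ncard, hmcard] at this
          exact_mod_cast this

end Assemble
set_option maxHeartbeats 1600000 in
/-- a strongly connected pure `d`-complex on `n` vertices with
`C(n−1,2) + d + 1 ≤ f₁ < C(n,2)` edges satisfies `τ₀(C) ≤ τ₀` of the Billera–Lee graph with
parameters `(n, f₁, d+1)` (graph of the `n`-vertex Billera–Lee `d`-sphere with `f₁` edges),
where `k` is the largest integer with `k ≤ n` and `C(k,2) + (n−k)·(d+1) ≤ f₁`, and
`j = f₁ − C(k,2) − (n−k−1)·(d+1)`. -/
theorem tau0_le_billeraLee_sphere_bound {V : Type*} [Fintype V] [DecidableEq V]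
    (d : ℕ) (hd : 1 ≤ d) (F : Finset (Finset V)) (hne : F.Nonempty)
    (hfacet : ∀ S ∈ F, S.card = d + 1)
    (hcover : ∀ v : V, ∃ S ∈ F, v ∈ S)
    (hsc : (dualGraph F d).Connected)
    (f₁ k j : ℕ)
    (hf₁ : f₁ = Nat.card (complexGraph F).edgeSet)
    (hf₁ge : (Fintype.card V - 1).choose 2 + d + 1 ≤ f₁)
    (hf₁lt : f₁ < (Fintype.card V).choose 2)
    (hk₀ : k ≤ Fintype.card V)
    (hk₁ : k.choose 2 + (Fintype.card V - k) * (d + 1) ≤ f₁)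
    (hkmax : ∀ k', k' ≤ Fintype.card V →
      k'.choose 2 + (Fintype.card V - k') * (d + 1) ≤ f₁ → k' ≤ k)
    (hj : (j : ℤ) = (f₁ : ℤ) - (k.choose 2 : ℤ)
      - ((Fintype.card V : ℤ) - (k : ℤ) - 1) * ((d : ℤ) + 1)) :
    tau0 (complexGraph F)
      ≤ 1 / ((Fintype.card V : ℚ) + 1) - 1 / ((k : ℚ) + 1)
        + 1 / (((j : ℚ) + 1) * ((j : ℚ) + 2))
        + ((Fintype.card V : ℚ) - (k : ℚ) - 1) / (((d : ℚ) + 2) * ((d : ℚ) + 3)) := by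
  classical
  letI : LinearOrder V := LinearOrder.lift' (Fintype.equivFin V) (Fintype.equivFin V).injective
  set n := Fintype.card V with hn
  have hn2 : 2 ≤ n := by
    by_contra h
    rw [Nat.choose_eq_zero_of_lt (by omega)] at hf₁lt
    omega
  -- k = n - 1
  have hklen : k ≤ n - 1 := by
    by_contra h
    have hkn : k = n := by omega
    rw [hkn, Nat.sub_self, zero_mul, add_zero] at hk₁
    omega
  have hkge : n - 1 ≤ k := by
    refine hkmax (n-1) (by omega) ?_
    have h1 : n - (n-1) = 1 := by omega
    rw [h1, one_mul]
    omega
  have hk : k = n - 1 := le_antisymm hklen hkge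
  -- edge counts
  set G := complexGraph F with hG
  have hf₁' : f₁ = G.edgeFinset.card := by
    rw [hf₁, SimpleGraph.edgeFinset, Set.toFinset_card, Nat.card_eq_fintype_card]
  set m := Gᶜ.edgeSet.ncard with hm
  have hsum : f₁ + m = n.choose 2 := by
    have e1 : f₁ = G.edgeSet.ncard := by
      rw [hf₁, Nat.card_coe_set_eq]
    have e3 : (⊤ : SimpleGraph V).edgeSet.ncard = n.choose 2 := by
      rw [← SimpleGraph.card_edgeFinset_top_eq_card_choose_two, SimpleGraph.edgeFinset,
        Set.toFinset_card, ← Nat.card_eq_fintype_card, Nat.card_coe_set_eq]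
    have e4 : G.edgeSet ∪ Gᶜ.edgeSet = (⊤ : SimpleGraph V).edgeSet := by
      rw [← SimpleGraph.edgeSet_sup, sup_compl_eq_top]
    have e5 : Disjoint G.edgeSet Gᶜ.edgeSet := by
      rw [SimpleGraph.disjoint_edgeSet]; exact disjoint_compl_right
    have e6 := Set.ncard_union_eq e5 (Set.toFinite _) (Set.toFinite _)
    rw [e4, e3] at e6
    omega
  -- choose recursion : n.choose 2 = (n-1) + (n-1).choose 2
  have hchoose : n.choose 2 = (n-1) + (n-1).choose 2 := by
    rcases Nat.exists_eq_succ_of_ne_zero (by omega : n ≠ 0) with ⟨p, hp⟩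
    rw [hp]
    simp [Nat.choose_succ_succ, Nat.choose_one_right]
  -- j + m = n - 1
  have hjm : n = m + 1 + j := by
    have hkz : (k : ℤ) = (n : ℤ) - 1 := by
      rw [hk]; push_cast [Nat.cast_sub (by omega : 1 ≤ n)]; ring
    rw [hkz, hk] at hj
    have hj' : (j : ℤ) = (f₁ : ℤ) - ((n-1).choose 2 : ℤ) := by
      rw [hj]; ring
    have h1 : (f₁ : ℤ) + (m : ℤ) = (n.choose 2 : ℤ) := by
      exact_mod_cast hsum
    have h2 : (n.choose 2 : ℤ) = ((n:ℤ) - 1) + ((n-1).choose 2 : ℤ) := by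
      rw [hchoose]; push_cast [Nat.cast_sub (by omega : 1 ≤ n)]; ring
    omega
  -- main bound
  have key := tau0_le_general G m j hm.symm hjm
  rw [← hn] at key
  refine key.trans (le_of_eq ?_)
  have hkq : (k : ℚ) = (n : ℚ) - 1 := by
    rw [hk]; push_cast [Nat.cast_sub (by omega : 1 ≤ n)]; ring
  rw [hkq]
  have hnq : (0:ℚ) < (n:ℚ) := by positivity
  have h1 : ((n:ℚ)+1) ≠ 0 := by positivity
  have h2 : ((j:ℚ)+1) ≠ 0 := by positivity
  have h3 : ((j:ℚ)+2) ≠ 0 := by positivity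
  have h0 : (n:ℚ) ≠ 0 := ne_of_gt hnq
  rw [show (n:ℚ) - ((n:ℚ) - 1) - 1 = 0 by ring, zero_div, add_zero, sub_add_cancel]
  field_simp
  ring
end

section
/- Let C be a simplicial complex of dimension d on a finite vertex set V with |V| = n and f-vector (f_{−1}, f₀, …, f_d). Then (1/(n+1)) · Σ_{W ⊆ V} χ̃(C[W])/C(n,|W|) = Σ_{k=−1}^{d} (−1)^k f_k/(k+2). Since χ̃(C[W]) = Σ_{i=−1}^{d} (−1)^i β̃_i(C[W]) by the Euler–Poincaré formula, this is equivalent to the statement Σ_{i=−1}^{d} (−1)^i τ_i(C) = Σ_{k=−1}^{d} (−1)^k f_k/(k+2). -/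
open Finset

-- Key identity: for s ≤ n, ∑_{j=0}^{n-s} C(n-s,j)/C(n,s+j) = (n+1)/(s+1) in ℚ.
lemma key_ident (n s : ℕ) (hs : s ≤ n) :
    ∑ j ∈ Finset.range (n - s + 1), ((n - s).choose j : ℚ) / (n.choose (s + j) : ℚ)
      = ((n : ℚ) + 1) / ((s : ℚ) + 1) := by
  have h1 : ∀ j ∈ Finset.range (n - s + 1),
      ((n - s).choose j : ℚ) / (n.choose (s + j) : ℚ)
        = ((s + j).choose s : ℚ) / (n.choose s : ℚ) := by
    intro j hj
    have hj' : j ≤ n - s := by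
      have := Finset.mem_range.mp hj; omega
    have hsj : s + j ≤ n := by omega
    have hmul : n.choose (s + j) * (s + j).choose s = n.choose s * (n - s).choose j := by
      have := Nat.choose_mul (n := n) (k := s + j) (s := s) (Nat.le_add_right _ _)
      simpa using this
    have hA : (0:ℚ) < n.choose (s + j) := by
      exact_mod_cast Nat.choose_pos hsj
    have hB : (0:ℚ) < n.choose s := by exact_mod_cast Nat.choose_pos hs
    rw [div_eq_div_iff (ne_of_gt hA) (ne_of_gt hB)]
    exact_mod_cast (by rw [mul_comm, mul_comm ((s+j).choose s)]; exact hmul.symm :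
      (n - s).choose j * n.choose s = (s + j).choose s * n.choose (s + j))
  rw [Finset.sum_congr rfl h1, ← Finset.sum_div]
  have h2 : ∑ j ∈ Finset.range (n - s + 1), ((s + j).choose s : ℚ)
      = ((n + 1).choose (s + 1) : ℚ) := by
    rw [← Nat.cast_sum]
    congr 1
    have := Nat.sum_Icc_choose n s
    rw [← this]
    apply Finset.sum_nbij' (fun j => s + j) (fun m => m - s)
    · intro j hj; simp only [Finset.mem_range] at hj; simp only [Finset.mem_Icc]; omega
    · intro m hm; simp only [Finset.mem_Icc] at hm; simp only [Finset.mem_range]; omega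
    · intro j hj; omega
    · intro m hm; simp only [Finset.mem_Icc] at hm; omega
    · intro j hj; rfl
  rw [h2]
  have h3 : (n + 1) * n.choose s = (n + 1).choose (s + 1) * (s + 1) :=
    Nat.add_one_mul_choose_eq n s
  have hB : (0:ℚ) < n.choose s := by exact_mod_cast Nat.choose_pos hs
  rw [div_eq_div_iff (ne_of_gt hB) (by positivity)]
  have := congrArg (fun x : ℕ => (x : ℚ)) h3
  push_cast at this ⊢
  linarith

-- Sum over supersets: for F : Finset α, ∑_{W ⊇ F} 1/C(n,|W|) = (n+1)/(|F|+1).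
lemma superset_sum {α : Type*} [Fintype α] [DecidableEq α] (F : Finset α) :
    ∑ W ∈ Finset.univ.filter (fun W : Finset α => F ⊆ W),
        (1 : ℚ) / ((Fintype.card α).choose W.card : ℚ)
      = ((Fintype.card α : ℚ) + 1) / ((F.card : ℚ) + 1) := by
  classical
  set n := Fintype.card α
  have hFn : F.card ≤ n := F.card_le_univ
  -- bijection W ↦ W \ F with powerset of Fᶜ
  have hb : ∑ W ∈ Finset.univ.filter (fun W : Finset α => F ⊆ W),
      (1 : ℚ) / (n.choose W.card : ℚ)
      = ∑ S ∈ Fᶜ.powerset, (1 : ℚ) / (n.choose (F.card + S.card) : ℚ) := by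
    apply Finset.sum_nbij' (fun W => W \ F) (fun S => F ∪ S)
    · intro W hW
      simp only [Finset.mem_filter] at hW
      simp only [Finset.mem_powerset]
      intro x hx
      simp only [Finset.mem_sdiff] at hx
      simp [Finset.mem_compl, hx.2]
    · intro S hS
      simp only [Finset.mem_filter]
      exact ⟨Finset.mem_univ _, Finset.subset_union_left⟩
    · intro W hW
      simp only [Finset.mem_filter] at hW
      exact Finset.union_sdiff_of_subset hW.2
    · intro S hS
      simp only [Finset.mem_powerset] at hS
      apply Finset.union_sdiff_cancel_left
      rw [Finset.disjoint_left]
      intro x hxF hxS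
      have := hS hxS
      simp [Finset.mem_compl] at this
      exact this hxF
    · intro W hW
      simp only [Finset.mem_filter] at hW
      have hc : F.card + (W \ F).card = W.card := by
        rw [Finset.card_sdiff_of_subset hW.2]
        have := Finset.card_le_card hW.2
        omega
      rw [hc]
  rw [hb]
  -- group by cardinality
  have hcompl : Fᶜ.card = n - F.card := by
    simp [Finset.card_compl, n]
  have hgroup : ∑ S ∈ Fᶜ.powerset, (1 : ℚ) / (n.choose (F.card + S.card) : ℚ)
      = ∑ j ∈ Finset.range (n - F.card + 1),
          ((n - F.card).choose j : ℚ) / (n.choose (F.card + j) : ℚ) := by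
    rw [Finset.sum_powerset]
    rw [hcompl]
    apply Finset.sum_congr rfl
    intro j hj
    have : ∀ S ∈ Fᶜ.powersetCard j, (1 : ℚ) / (n.choose (F.card + S.card) : ℚ)
        = (1 : ℚ) / (n.choose (F.card + j) : ℚ) := by
      intro S hS
      rw [(Finset.mem_powersetCard.mp hS).2]
    rw [Finset.sum_congr rfl this, Finset.sum_const, Finset.card_powersetCard, hcompl]
    simp [div_eq_mul_inv]
  rw [hgroup, key_ident n F.card hFn]


/-- for a simplicial complex `C` of dimension `d` on a finite vertex set `V`
with `|V| = n`, `(1/(n+1)) · Σ_{W ⊆ V} χ̃(C[W])/C(n,|W|) = Σ_{k=−1}^{d} (−1)^k f_k/(k+2)`,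
where `χ̃` is the reduced Euler characteristic (a face `F` contributes `(−1)^{|F|−1}`) and
`f_k` is the number of faces of size `k+1` (reindexed below by the size `s = k+1`). -/
theorem tau_alternating_sum_fvector {α : Type*} [Fintype α] [DecidableEq α] (d : ℕ)
    (K : Finset (Finset α))
    (hclosed : ∀ F ∈ K, ∀ F' ⊆ F, F' ∈ K)
    (hempty : (∅ : Finset α) ∈ K)
    (hvert : ∀ v : α, {v} ∈ K)
    (hdim : ∀ F ∈ K, F.card ≤ d + 1)
    (hdim' : ∃ F ∈ K, F.card = d + 1) :
    ((Fintype.card α : ℚ) + 1)⁻¹ *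
        ∑ W : Finset α,
          (∑ F ∈ K.filter (fun F => F ⊆ W), (-1 : ℚ) ^ (F.card + 1)) /
            ((Fintype.card α).choose W.card : ℚ)
      = ∑ s ∈ Finset.range (d + 2),
          (-1 : ℚ) ^ (s + 1) * ((K.filter fun F => F.card = s).card : ℚ) / ((s : ℚ) + 1) := by
  classical
  set n := Fintype.card α
  have hn1 : ((n : ℚ) + 1) ≠ 0 := by positivity
  have hswap : ∑ W : Finset α,
      (∑ F ∈ K.filter (fun F => F ⊆ W), (-1 : ℚ) ^ (F.card + 1)) / (n.choose W.card : ℚ)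
      = ∑ F ∈ K, (-1 : ℚ) ^ (F.card + 1) * (((n : ℚ) + 1) / ((F.card : ℚ) + 1)) := by
    have step1 : ∀ W : Finset α,
        (∑ F ∈ K.filter (fun F => F ⊆ W), (-1 : ℚ) ^ (F.card + 1)) / (n.choose W.card : ℚ)
        = ∑ F ∈ K, (if F ⊆ W then ((-1 : ℚ) ^ (F.card + 1)) / (n.choose W.card : ℚ) else 0) := by
      intro W
      rw [Finset.sum_div, Finset.sum_filter]
    rw [Finset.sum_congr rfl (fun W _ => step1 W), Finset.sum_comm]
    apply Finset.sum_congr rfl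
    intro F hF
    rw [← Finset.sum_filter]
    have : ∑ W ∈ Finset.univ.filter (fun W : Finset α => F ⊆ W),
        ((-1 : ℚ) ^ (F.card + 1)) / (n.choose W.card : ℚ)
        = (-1 : ℚ) ^ (F.card + 1) * ∑ W ∈ Finset.univ.filter (fun W : Finset α => F ⊆ W),
            (1 : ℚ) / (n.choose W.card : ℚ) := by
      rw [Finset.mul_sum]
      apply Finset.sum_congr rfl
      intro W _
      ring
    rw [this, superset_sum]
  rw [hswap, Finset.mul_sum]
  have step2 : ∀ F ∈ K, ((n : ℚ) + 1)⁻¹ * ((-1 : ℚ) ^ (F.card + 1) * (((n : ℚ) + 1) / ((F.card : ℚ) + 1)))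
      = (-1 : ℚ) ^ (F.card + 1) / ((F.card : ℚ) + 1) := by
    intro F _
    field_simp
  rw [Finset.sum_congr rfl step2]
  -- group by cardinality
  rw [← Finset.sum_fiberwise_of_maps_to (g := fun F : Finset α => F.card)
      (t := Finset.range (d + 2)) (fun F hF => by
        simp only [Finset.mem_range]
        exact Nat.lt_succ_of_le (hdim F hF))]
  apply Finset.sum_congr rfl
  intro s hs
  have : ∀ F ∈ K.filter (fun F => F.card = s),
      (-1 : ℚ) ^ (F.card + 1) / ((F.card : ℚ) + 1) = (-1 : ℚ) ^ (s + 1) / ((s : ℚ) + 1) := by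
    intro F hF
    rw [(Finset.mem_filter.mp hF).2]
  rw [Finset.sum_congr rfl this, Finset.sum_const, nsmul_eq_mul]
  ring
end

section
/- Let C be a simplicial complex of dimension d on a finite vertex set V with |V| = n, with f-vector (f_{−1}, f₀, …, f_d) and h-vector (h₀, …, h_{d+1}) defined by h_k = Σ_{i=0}^{k} (−1)^{k−i} C(d+1−i, k−i) f_{i−1}. Then (1/(n+1)) · Σ_{W ⊆ V} χ̃(C[W])/C(n,|W|) = Σ_{k=0}^{d+1} (−1)^{k+1} h_k/((d+2)·C(d+1, k)); equivalently, Σ_{i=−1}^{d} (−1)^i τ_i(C) = Σ_{k=0}^{d+1} (−1)^{k+1} h_k/((d+2)·C(d+1, k)). -/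
open Finset

lemma key_sum_s15 (n i : ℕ) (hi : i ≤ n) :
    ∑ s ∈ Finset.range (n - i + 1), ((n - i).choose s : ℚ) / ((n.choose (i + s) : ℚ)) =
      ((n : ℚ) + 1) / ((i : ℚ) + 1) := by
  have h1 : ∀ s ∈ Finset.range (n - i + 1),
      ((n - i).choose s : ℚ) / ((n.choose (i + s) : ℚ)) =
        (((i + s).choose i : ℚ)) / ((n.choose i : ℚ)) := by
    intro s hs
    rw [Finset.mem_range] at hs
    have hsn : i + s ≤ n := by omega
    have h2 := Nat.choose_mul (n := n) (k := i + s) (Nat.le_add_right i s)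
    have h3 : (i + s) - i = s := by omega
    rw [h3] at h2
    have hb : ((n.choose (i + s) : ℚ)) ≠ 0 :=
      Nat.cast_ne_zero.mpr (Nat.choose_pos hsn).ne'
    have hd : ((n.choose i : ℚ)) ≠ 0 :=
      Nat.cast_ne_zero.mpr (Nat.choose_pos hi).ne'
    rw [div_eq_div_iff hb hd]
    have := congrArg (fun x : ℕ => (x : ℚ)) h2
    push_cast at this ⊢
    linarith [this]
  rw [Finset.sum_congr rfl h1, ← Finset.sum_div]
  have h4 : ∑ s ∈ Finset.range (n - i + 1), (((i + s).choose i : ℚ)) =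
      (((n + 1).choose (i + 1) : ℚ)) := by
    rw [← Nat.cast_sum]
    congr 1
    rw [← Nat.sum_Icc_choose n i, ← Finset.Ico_add_one_right_eq_Icc, Finset.sum_Ico_eq_sum_range]
    have he : n + 1 - i = n - i + 1 := by omega
    rw [he]
  rw [h4]
  have h5 := Nat.add_one_mul_choose_eq n i
  have hd : ((n.choose i : ℚ)) ≠ 0 := Nat.cast_ne_zero.mpr (Nat.choose_pos hi).ne'
  have hi1 : ((i : ℚ) + 1) ≠ 0 := by positivity
  rw [div_eq_div_iff hd hi1]
  have := congrArg (fun x : ℕ => (x : ℚ)) h5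
  push_cast at this ⊢
  linarith [this]

/-- for a simplicial complex `C` of dimension `d` on a finite vertex set `V`
with `|V| = n` and `h`-vector `h_k = Σ_{i=0}^{k} (−1)^{k−i} C(d+1−i, k−i) f_{i−1}`,
`(1/(n+1)) · Σ_{W ⊆ V} χ̃(C[W])/C(n,|W|) = Σ_{k=0}^{d+1} (−1)^{k+1} h_k/((d+2)·C(d+1,k))`,
where `χ̃` is the reduced Euler characteristic (a face `F` contributes `(−1)^{|F|−1}`) and
`f_{i−1}` is the number of faces of size `i`. -/
theorem tau_alternating_sum_hvector {α : Type*} [Fintype α] [DecidableEq α] (d : ℕ)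
    (K : Finset (Finset α))
    (hclosed : ∀ F ∈ K, ∀ F' ⊆ F, F' ∈ K)
    (hempty : (∅ : Finset α) ∈ K)
    (hvert : ∀ v : α, {v} ∈ K)
    (hdim : ∀ F ∈ K, F.card ≤ d + 1)
    (hdim' : ∃ F ∈ K, F.card = d + 1)
    (h : ℕ → ℚ)
    (hh : ∀ m, h m = ∑ i ∈ Finset.range (m + 1),
      (-1 : ℚ) ^ (m - i) * ((d + 1 - i).choose (m - i) : ℚ) *
        ((K.filter fun F => F.card = i).card : ℚ)) :
    ((Fintype.card α : ℚ) + 1)⁻¹ *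
        ∑ W : Finset α,
          (∑ F ∈ K.filter (fun F => F ⊆ W), (-1 : ℚ) ^ (F.card + 1)) /
            ((Fintype.card α).choose W.card : ℚ)
      = ∑ m ∈ Finset.range (d + 2),
          (-1 : ℚ) ^ (m + 1) * h m / (((d : ℚ) + 2) * ((d + 1).choose m : ℚ)) := by
  classical
  set n := Fintype.card α with hn
  -- LHS step 1: swap sums and evaluate the inner sum over supersets
  have step1 : ∑ W : Finset α,
      (∑ F ∈ K.filter (fun F => F ⊆ W), (-1 : ℚ) ^ (F.card + 1)) /
        ((n.choose W.card : ℚ))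
      = ∑ F ∈ K, (-1 : ℚ) ^ (F.card + 1) * (((n : ℚ) + 1) / ((F.card : ℚ) + 1)) := by
    have e1 : ∀ W ∈ (univ : Finset (Finset α)),
        (∑ F ∈ K.filter (fun F => F ⊆ W), (-1 : ℚ) ^ (F.card + 1)) /
          ((n.choose W.card : ℚ))
        = ∑ F ∈ K.filter (fun F => F ⊆ W),
            (-1 : ℚ) ^ (F.card + 1) / ((n.choose W.card : ℚ)) :=
      fun W _ => Finset.sum_div _ _ _
    rw [Finset.sum_congr rfl e1]
    rw [Finset.sum_comm' (s := (univ : Finset (Finset α)))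
      (t := fun W => K.filter (fun F => F ⊆ W)) (t' := K)
      (s' := fun F => univ.filter (fun W => F ⊆ W))
      (fun W F => by simp [Finset.mem_filter, and_comm])]
    refine Finset.sum_congr rfl fun F hF => ?_
    have hFcard : F.card ≤ n := F.card_le_univ
    have e2 : ∑ W ∈ univ.filter (fun W => F ⊆ W),
        (-1 : ℚ) ^ (F.card + 1) / ((n.choose W.card : ℚ))
        = ∑ S ∈ Fᶜ.powerset,
            (-1 : ℚ) ^ (F.card + 1) / ((n.choose (S.card + F.card) : ℚ)) := by
      refine Finset.sum_nbij' (fun W => W \ F) (fun S => S ∪ F) ?_ ?_ ?_ ?_ ?_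
      · intro W hW
        simp only [Finset.mem_filter, Finset.mem_univ, true_and] at hW
        rw [Finset.mem_powerset]
        intro x hx
        rw [Finset.mem_sdiff] at hx
        simpa using hx.2
      · intro S hS
        simp only [Finset.mem_filter, Finset.mem_univ, true_and]
        exact Finset.subset_union_right
      · intro W hW
        simp only [Finset.mem_filter, Finset.mem_univ, true_and] at hW
        exact Finset.sdiff_union_of_subset hW
      · intro S hS
        rw [Finset.mem_powerset] at hS
        have hdisj : Disjoint S F := Finset.disjoint_left.mpr fun x hx => by
          have := hS hx; simpa using this
        show (S ∪ F) \ F = S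
        rw [Finset.union_sdiff_distrib, Finset.sdiff_self,
          Finset.sdiff_eq_self_of_disjoint hdisj, Finset.union_empty]
      · intro W hW
        simp only [Finset.mem_filter, Finset.mem_univ, true_and] at hW
        rw [Finset.card_sdiff_add_card_eq_card hW]
    rw [e2,
      Finset.sum_powerset_apply_card
        (f := fun c => (-1 : ℚ) ^ (F.card + 1) / ((n.choose (c + F.card) : ℚ))),
      Finset.card_compl]
    have e3 : ∀ m ∈ Finset.range (n - F.card + 1),
        ((n - F.card).choose m) • ((-1 : ℚ) ^ (F.card + 1) /
            ((n.choose (m + F.card) : ℚ)))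
        = (-1 : ℚ) ^ (F.card + 1) *
            (((n - F.card).choose m : ℚ) / ((n.choose (F.card + m) : ℚ))) := by
      intro m _
      rw [add_comm m F.card, nsmul_eq_mul]
      ring
    rw [Finset.sum_congr rfl e3, ← Finset.mul_sum, key_sum_s15 n F.card hFcard]
  rw [step1, Finset.mul_sum]
  -- LHS step 2: cancel (n+1) and group faces by cardinality
  have hn1 : ((n : ℚ) + 1) ≠ 0 := by positivity
  have step2 : ∀ F ∈ K, ((n : ℚ) + 1)⁻¹ *
      ((-1 : ℚ) ^ (F.card + 1) * (((n : ℚ) + 1) / ((F.card : ℚ) + 1)))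
      = (-1 : ℚ) ^ (F.card + 1) / ((F.card : ℚ) + 1) := by
    intro F _
    have hc1 : ((F.card : ℚ) + 1) ≠ 0 := by positivity
    field_simp
  rw [Finset.sum_congr rfl step2]
  have step3 : ∑ F ∈ K, (-1 : ℚ) ^ (F.card + 1) / ((F.card : ℚ) + 1)
      = ∑ i ∈ Finset.range (d + 2),
          ((K.filter fun F => F.card = i).card : ℚ) *
            ((-1 : ℚ) ^ (i + 1) / ((i : ℚ) + 1)) := by
    rw [← Finset.sum_fiberwise_of_maps_to (g := Finset.card) (t := Finset.range (d + 2))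
      (fun F hF => Finset.mem_range.mpr (Nat.lt_succ_of_le (hdim F hF)))
      (fun F => (-1 : ℚ) ^ (F.card + 1) / ((F.card : ℚ) + 1))]
    refine Finset.sum_congr rfl fun i _ => ?_
    rw [Finset.sum_congr rfl
      (fun F hF => by rw [(Finset.mem_filter.mp hF).2]),
      Finset.sum_const, nsmul_eq_mul]
  rw [step3]
  -- RHS: substitute h, swap sums, evaluate inner sum
  have e1 : ∀ m ∈ Finset.range (d + 2),
      (-1 : ℚ) ^ (m + 1) * h m / (((d : ℚ) + 2) * ((d + 1).choose m : ℚ))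
      = ∑ i ∈ Finset.range (m + 1),
          (-1 : ℚ) ^ (m + 1) * ((-1 : ℚ) ^ (m - i) * ((d + 1 - i).choose (m - i) : ℚ) *
            ((K.filter fun F => F.card = i).card : ℚ)) /
          (((d : ℚ) + 2) * ((d + 1).choose m : ℚ)) := by
    intro m _
    rw [hh m, Finset.mul_sum, Finset.sum_div]
  rw [Finset.sum_congr rfl e1]
  rw [Finset.sum_comm' (s := Finset.range (d + 2))
    (t := fun m => Finset.range (m + 1)) (t' := Finset.range (d + 2))
    (s' := fun i => Finset.Ico i (d + 2))
    (fun m i => by simp only [Finset.mem_range, Finset.mem_Ico]; omega)]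
  refine (Finset.sum_congr rfl fun i hi => ?_).symm
  rw [Finset.mem_range] at hi
  have hi' : i ≤ d + 1 := by omega
  have hd2 : ((d : ℚ) + 2) ≠ 0 := by positivity
  have hi1 : ((i : ℚ) + 1) ≠ 0 := by positivity
  set fi : ℚ := ((K.filter fun F => F.card = i).card : ℚ) with hfi
  have e2 : ∀ m ∈ Finset.Ico i (d + 2),
      (-1 : ℚ) ^ (m + 1) * ((-1 : ℚ) ^ (m - i) * ((d + 1 - i).choose (m - i) : ℚ) * fi) /
        (((d : ℚ) + 2) * ((d + 1).choose m : ℚ))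
      = fi * (-1 : ℚ) ^ (i + 1) / ((d : ℚ) + 2) *
          (((d + 1 - i).choose (m - i) : ℚ) / (((d + 1).choose m : ℚ))) := by
    intro m hm
    rw [Finset.mem_Ico] at hm
    have hsign : (-1 : ℚ) ^ (m + 1) * (-1 : ℚ) ^ (m - i) = (-1 : ℚ) ^ (i + 1) := by
      rw [← pow_add]
      have he : m + 1 + (m - i) = (i + 1) + 2 * (m - i) := by omega
      rw [he, pow_add, pow_mul]
      norm_num
    rw [div_mul_div_comm]
    congr 1
    rw [← hsign]
    ring
  rw [Finset.sum_congr rfl e2, ← Finset.mul_sum, Finset.sum_Ico_eq_sum_range]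
  have e3 : ∀ k ∈ Finset.range (d + 2 - i),
      ((d + 1 - i).choose ((i + k) - i) : ℚ) / (((d + 1).choose (i + k) : ℚ))
      = ((d + 1 - i).choose k : ℚ) / (((d + 1).choose (i + k) : ℚ)) := by
    intro k _
    have hk : (i + k) - i = k := by omega
    rw [hk]
  rw [Finset.sum_congr rfl e3]
  have hrange : d + 2 - i = (d + 1) - i + 1 := by omega
  rw [hrange, key_sum_s15 (d + 1) i hi']
  push_cast
  field_simp
  ring
end

section
/- Let G be the graph obtained from the complete graph on n vertices by deleting exactly two distinct edges. If the two deleted edges are vertex-disjoint (so n ≥ 4), then τ₀(G) = 2/((n+1)·C(n,2)); if the two deleted edges share a vertex (so n ≥ 3), then τ₀(G) = (1/(n+1))·(2/C(n,2) + 1/C(n,3)). (This computes τ₀ of any combinatorial manifold from whose 1-skeleton exactly two edges are missing.) -/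
open Finset

open SimpleGraph
lemma preconn_of_mediator {V : Type*} (e1 e2 : Sym2 V) (W : Finset V)
    (h : ∀ p q : V, p ∈ W → q ∈ W → p ≠ q → (s(p,q) = e1 ∨ s(p,q) = e2) →
      ∃ m ∈ W, m ≠ p ∧ m ≠ q ∧ s(p,m) ≠ e1 ∧ s(p,m) ≠ e2 ∧ s(m,q) ≠ e1 ∧ s(m,q) ≠ e2) :
    (((⊤ : SimpleGraph V).deleteEdges {e1,e2}).induce (↑W : Set V)).Preconnected := by
  rintro ⟨p, hp⟩ ⟨q, hq⟩
  by_cases hpq : p = q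
  · subst hpq; rfl
  by_cases hdel : s(p,q) = e1 ∨ s(p,q) = e2
  · obtain ⟨m, hmW, hmp, hmq, h1, h2, h3, h4⟩ :=
      h p q (by exact_mod_cast hp) (by exact_mod_cast hq) hpq hdel
    have hm : m ∈ (↑W : Set V) := by exact_mod_cast hmW
    have a1 : (((⊤ : SimpleGraph V).deleteEdges {e1,e2}).induce (↑W : Set V)).Adj
        ⟨p,hp⟩ ⟨m, hm⟩ := by
      simp only [induce, deleteEdges_adj, comap_adj, top_adj, Set.mem_insert_iff,
        Set.mem_singleton_iff, not_or]
      exact ⟨hmp.symm, h1, h2⟩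
    have a2 : (((⊤ : SimpleGraph V).deleteEdges {e1,e2}).induce (↑W : Set V)).Adj
        ⟨m, hm⟩ ⟨q,hq⟩ := by
      simp only [induce, deleteEdges_adj, comap_adj, top_adj, Set.mem_insert_iff,
        Set.mem_singleton_iff, not_or]
      exact ⟨hmq, h3, h4⟩
    exact a1.reachable.trans a2.reachable
  · push_neg at hdel
    refine SimpleGraph.Adj.reachable ?_
    simp only [induce, deleteEdges_adj, comap_adj, top_adj, Set.mem_insert_iff,
      Set.mem_singleton_iff, not_or]
    exact ⟨hpq, hdel.1, hdel.2⟩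

lemma cc_card_two {α : Type*} {G : SimpleGraph α} (a b : α)
    (hnr : ¬ G.Reachable a b) (hall : ∀ c, G.Reachable a c ∨ G.Reachable b c) :
    Nat.card G.ConnectedComponent = 2 := by
  rw [Nat.card_eq_two_iff]
  refine ⟨G.connectedComponentMk a, G.connectedComponentMk b, ?_, ?_⟩
  · simpa [SimpleGraph.ConnectedComponent.eq] using hnr
  · ext c
    simp only [Set.mem_insert_iff, Set.mem_singleton_iff, Set.mem_univ, iff_true]
    induction c using SimpleGraph.ConnectedComponent.ind with
    | _ w =>
      rcases hall w with h | h
      · exact Or.inl (SimpleGraph.ConnectedComponent.sound h.symm)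
      · exact Or.inr (SimpleGraph.ConnectedComponent.sound h.symm)

lemma isolated_reachable {α : Type*} {G : SimpleGraph α} {a b : α}
    (h : ∀ z, ¬ G.Adj a z) (hr : G.Reachable a b) : a = b := by
  obtain ⟨w⟩ := hr
  cases w with
  | nil => rfl
  | cons h' _ => exact absurd h' (h _)

lemma cc_pair {V : Type*} [DecidableEq V] (E : Set (Sym2 V)) (p q : V) (hpq : p ≠ q)
    (hmem : s(p,q) ∈ E) :
    Nat.card ((((⊤ : SimpleGraph V).deleteEdges E).induce
      (↑({p,q} : Finset V) : Set V)).ConnectedComponent) = 2 := by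
  have hp : p ∈ (↑({p,q} : Finset V) : Set V) := by simp
  have hq : q ∈ (↑({p,q} : Finset V) : Set V) := by simp
  have hiso : ∀ z, ¬ (((⊤ : SimpleGraph V).deleteEdges E).induce
      (↑({p,q} : Finset V) : Set V)).Adj ⟨p, hp⟩ z := by
    rintro ⟨z, hz⟩ hadj
    simp only [induce, deleteEdges_adj, comap_adj, top_adj] at hadj
    have : z = p ∨ z = q := by simpa using hz
    rcases this with rfl | rfl
    · exact hadj.1 rfl
    · exact hadj.2 hmem
  refine cc_card_two ⟨p, hp⟩ ⟨q, hq⟩ (fun hr => hpq (congrArg Subtype.val (isolated_reachable hiso hr))) ?_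
  rintro ⟨z, hz⟩
  have : z = p ∨ z = q := by simpa using hz
  rcases this with rfl | rfl
  · exact Or.inl (Reachable.refl _)
  · exact Or.inr (Reachable.refl _)

lemma cc_triple {V : Type*} [DecidableEq V] (E : Set (Sym2 V)) (a b c : V)
    (hab : a ≠ b) (hac : a ≠ c) (hbc : b ≠ c)
    (h1 : s(a,b) ∈ E) (h2 : s(a,c) ∈ E) (h3 : s(b,c) ∉ E) :
    Nat.card ((((⊤ : SimpleGraph V).deleteEdges E).induce
      (↑({a,b,c} : Finset V) : Set V)).ConnectedComponent) = 2 := by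
  have ha : a ∈ (↑({a,b,c} : Finset V) : Set V) := by simp
  have hb : b ∈ (↑({a,b,c} : Finset V) : Set V) := by simp
  have hc : c ∈ (↑({a,b,c} : Finset V) : Set V) := by simp
  have hiso : ∀ z, ¬ (((⊤ : SimpleGraph V).deleteEdges E).induce
      (↑({a,b,c} : Finset V) : Set V)).Adj ⟨a, ha⟩ z := by
    rintro ⟨z, hz⟩ hadj
    simp only [induce, deleteEdges_adj, comap_adj, top_adj] at hadj
    have : z = a ∨ z = b ∨ z = c := by simpa using hz
    rcases this with rfl | rfl | rfl
    · exact hadj.1 rfl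
    · exact hadj.2 h1
    · exact hadj.2 h2
  refine cc_card_two ⟨a, ha⟩ ⟨b, hb⟩
    (fun hr => hab (congrArg Subtype.val (isolated_reachable hiso hr))) ?_
  rintro ⟨z, hz⟩
  have : z = a ∨ z = b ∨ z = c := by simpa using hz
  rcases this with rfl | rfl | rfl
  · exact Or.inl (Reachable.refl _)
  · exact Or.inr (Reachable.refl _)
  · refine Or.inr (SimpleGraph.Adj.reachable ?_)
    simp only [induce, deleteEdges_adj, comap_adj, top_adj]
    exact ⟨hbc, h3⟩

lemma cc_card_one {α : Type*} {G : SimpleGraph α} [Nonempty α] (h : G.Preconnected) :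
    Nat.card G.ConnectedComponent = 1 :=
  Nat.card_eq_one_iff_unique.mpr
    ⟨h.subsingleton_connectedComponent, ⟨G.connectedComponentMk (Classical.arbitrary α)⟩⟩

lemma term_zero {V : Type*} [Fintype V] (G : SimpleGraph V) (W : Finset V)
    (h : W.Nonempty → (G.induce (↑W : Set V)).Preconnected) :
    (if W.Nonempty then (Nat.card (G.induce (↑W : Set V)).ConnectedComponent : ℚ) - 1 else 0) /
      ((Fintype.card V).choose W.card : ℚ) = 0 := by
  by_cases hW : W.Nonempty
  · have : Nonempty ↑(↑W : Set V) := (Finset.coe_nonempty.mpr hW).to_subtype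
    rw [if_pos hW, cc_card_one (h hW)]
    simp
  · rw [if_neg hW, zero_div]

lemma tau0_disj {V : Type*} [Fintype V] [DecidableEq V] (u v x y : V) (huv : u ≠ v)
    (hxy : x ≠ y) (hd : Disjoint ({u,v} : Finset V) ({x,y} : Finset V)) :
    tau0 ((⊤ : SimpleGraph V).deleteEdges {s(u,v), s(x,y)}) =
      2 / (((Fintype.card V : ℚ) + 1) * ((Fintype.card V).choose 2 : ℚ)) := by
  classical
  have hu : u ∉ ({x,y} : Finset V) := Finset.disjoint_left.mp hd (by simp)
  have hv : v ∉ ({x,y} : Finset V) := Finset.disjoint_left.mp hd (by simp)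
  simp only [Finset.mem_insert, Finset.mem_singleton, not_or] at hu hv
  obtain ⟨hux, huy⟩ := hu
  obtain ⟨hvx, hvy⟩ := hv
  have hxu : x ≠ u := fun h => hux h.symm
  have hyu : y ≠ u := fun h => huy h.symm
  have hxv : x ≠ v := fun h => hvx h.symm
  have hyv : y ≠ v := fun h => hvy h.symm
  have hvu := huv.symm; have hyx := hxy.symm
  set G := (⊤ : SimpleGraph V).deleteEdges {s(u,v), s(x,y)} with hG
  have hzero : ∀ W ∈ (Finset.univ : Finset (Finset V)),
      W ∉ ({{u,v},{x,y}} : Finset (Finset V)) →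
      (if W.Nonempty then (Nat.card (G.induce (↑W : Set V)).ConnectedComponent : ℚ) - 1 else 0) /
        ((Fintype.card V).choose W.card : ℚ) = 0 := by
    intro W _ hWS
    simp only [Finset.mem_insert, Finset.mem_singleton, not_or] at hWS
    obtain ⟨hW1, hW2⟩ := hWS
    apply term_zero
    intro _
    apply preconn_of_mediator
    intro p q hp hq hpq hdel
    rcases hdel with h | h
    · rw [Sym2.eq_iff] at h
      have hsub : ({u,v} : Finset V) ⊆ W := by
        intro z hz
        simp only [Finset.mem_insert, Finset.mem_singleton] at hz
        rcases hz with rfl | rfl <;> rcases h with ⟨rfl, rfl⟩ | ⟨rfl, rfl⟩ <;> assumption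
      obtain ⟨m, hmW, hm⟩ := Finset.exists_of_ssubset (hsub.ssubset_of_ne (fun e => hW1 e.symm))
      simp only [Finset.mem_insert, Finset.mem_singleton, not_or] at hm
      obtain ⟨hmu, hmv⟩ := hm
      rcases h with ⟨rfl, rfl⟩ | ⟨rfl, rfl⟩ <;>
        refine ⟨m, hmW, ?_, ?_, ?_, ?_, ?_, ?_⟩ <;>
        simp only [Sym2.eq_iff, not_or, ne_eq] <;> tauto
    · rw [Sym2.eq_iff] at h
      have hsub : ({x,y} : Finset V) ⊆ W := by
        intro z hz
        simp only [Finset.mem_insert, Finset.mem_singleton] at hz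
        rcases hz with rfl | rfl <;> rcases h with ⟨rfl, rfl⟩ | ⟨rfl, rfl⟩ <;> assumption
      obtain ⟨m, hmW, hm⟩ := Finset.exists_of_ssubset (hsub.ssubset_of_ne (fun e => hW2 e.symm))
      simp only [Finset.mem_insert, Finset.mem_singleton, not_or] at hm
      obtain ⟨hmx, hmy⟩ := hm
      rcases h with ⟨rfl, rfl⟩ | ⟨rfl, rfl⟩ <;>
        refine ⟨m, hmW, ?_, ?_, ?_, ?_, ?_, ?_⟩ <;>
        simp only [Sym2.eq_iff, not_or, ne_eq] <;> tauto
  have hsetne : ({u,v} : Finset V) ≠ {x,y} := by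
    intro h
    have : u ∈ ({x,y} : Finset V) := h ▸ (by simp)
    simp only [Finset.mem_insert, Finset.mem_singleton] at this
    tauto
  rw [tau0, ← Finset.sum_subset (Finset.subset_univ ({{u,v},{x,y}} : Finset (Finset V))) hzero,
    Finset.sum_pair hsetne]
  rw [if_pos ⟨u, by simp⟩, if_pos ⟨x, by simp⟩,
    cc_pair _ u v huv (by simp), cc_pair _ x y hxy (by simp),
    Finset.card_pair huv, Finset.card_pair hxy]
  have h2n : 2 ≤ Fintype.card V := by
    have := Finset.card_le_univ ({u,v} : Finset V)
    rwa [Finset.card_pair huv] at this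
  have hc2 : ((Fintype.card V).choose 2 : ℚ) ≠ 0 :=
    Nat.cast_ne_zero.mpr (Nat.choose_pos h2n).ne'
  have hn1 : ((Fintype.card V : ℚ) + 1) ≠ 0 := by positivity
  field_simp
  ring

lemma tau0_shared {V : Type*} [Fintype V] [DecidableEq V] (a b c : V) (hab : a ≠ b)
    (hac : a ≠ c) (hbc : b ≠ c) :
    tau0 ((⊤ : SimpleGraph V).deleteEdges {s(a,b), s(a,c)}) =
      ((Fintype.card V : ℚ) + 1)⁻¹ *
        (2 / ((Fintype.card V).choose 2 : ℚ) + 1 / ((Fintype.card V).choose 3 : ℚ)) := by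
  classical
  have hba : b ≠ a := hab.symm
  have hca : c ≠ a := hac.symm
  have hcb : c ≠ b := hbc.symm
  set G := (⊤ : SimpleGraph V).deleteEdges {s(a,b), s(a,c)} with hG
  set S : Finset (Finset V) := {{a,b}, {a,c}, {a,b,c}} with hS
  have hcard3 : ({a,b,c} : Finset V).card = 3 := by
    rw [Finset.card_insert_of_notMem (by simp [hab, hac]), Finset.card_pair hbc]
  have hzero : ∀ W ∈ (Finset.univ : Finset (Finset V)), W ∉ S →
      (if W.Nonempty then (Nat.card (G.induce (↑W : Set V)).ConnectedComponent : ℚ) - 1 else 0) /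
        ((Fintype.card V).choose W.card : ℚ) = 0 := by
    intro W _ hWS
    simp only [hS, Finset.mem_insert, Finset.mem_singleton, not_or] at hWS
    obtain ⟨hW1, hW2, hW3⟩ := hWS
    apply term_zero
    intro _
    apply preconn_of_mediator
    intro p q hp hq hpq hdel
    have key : ∃ m ∈ W, m ≠ a ∧ m ≠ b ∧ m ≠ c := by
      rcases hdel with h | h <;> rw [Sym2.eq_iff] at h
      · have hsub : ({a,b} : Finset V) ⊆ W := by
          intro z hz
          simp only [Finset.mem_insert, Finset.mem_singleton] at hz
          rcases hz with rfl | rfl <;> rcases h with ⟨rfl, rfl⟩ | ⟨rfl, rfl⟩ <;> assumption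
        by_cases hcW : c ∈ W
        · have hsub3 : ({a,b,c} : Finset V) ⊆ W := by
            intro z hz
            simp only [Finset.mem_insert, Finset.mem_singleton] at hz
            rcases hz with rfl | rfl | rfl
            · exact hsub (by simp)
            · exact hsub (by simp)
            · exact hcW
          obtain ⟨m, hmW, hm⟩ :=
            Finset.exists_of_ssubset (hsub3.ssubset_of_ne (fun e => hW3 e.symm))
          simp only [Finset.mem_insert, Finset.mem_singleton, not_or] at hm
          exact ⟨m, hmW, hm.1, hm.2.1, hm.2.2⟩
        · obtain ⟨m, hmW, hm⟩ :=
            Finset.exists_of_ssubset (hsub.ssubset_of_ne (fun e => hW1 e.symm))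
          simp only [Finset.mem_insert, Finset.mem_singleton, not_or] at hm
          exact ⟨m, hmW, hm.1, hm.2, fun e => hcW (e ▸ hmW)⟩
      · have hsub : ({a,c} : Finset V) ⊆ W := by
          intro z hz
          simp only [Finset.mem_insert, Finset.mem_singleton] at hz
          rcases hz with rfl | rfl <;> rcases h with ⟨rfl, rfl⟩ | ⟨rfl, rfl⟩ <;> assumption
        by_cases hbW : b ∈ W
        · have hsub3 : ({a,b,c} : Finset V) ⊆ W := by
            intro z hz
            simp only [Finset.mem_insert, Finset.mem_singleton] at hz
            rcases hz with rfl | rfl | rfl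
            · exact hsub (by simp)
            · exact hbW
            · exact hsub (by simp)
          obtain ⟨m, hmW, hm⟩ :=
            Finset.exists_of_ssubset (hsub3.ssubset_of_ne (fun e => hW3 e.symm))
          simp only [Finset.mem_insert, Finset.mem_singleton, not_or] at hm
          exact ⟨m, hmW, hm.1, hm.2.1, hm.2.2⟩
        · obtain ⟨m, hmW, hm⟩ :=
            Finset.exists_of_ssubset (hsub.ssubset_of_ne (fun e => hW2 e.symm))
          simp only [Finset.mem_insert, Finset.mem_singleton, not_or] at hm
          exact ⟨m, hmW, hm.1, fun e => hbW (e ▸ hmW), hm.2⟩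
    obtain ⟨m, hmW, hma, hmb, hmc⟩ := key
    rcases hdel with h | h <;> rw [Sym2.eq_iff] at h <;>
      rcases h with ⟨rfl, rfl⟩ | ⟨rfl, rfl⟩ <;>
      refine ⟨m, hmW, ?_, ?_, ?_, ?_, ?_, ?_⟩ <;>
      simp only [Sym2.eq_iff, not_or, ne_eq] <;> tauto
  have h12 : ({a,b} : Finset V) ≠ {a,c} := by
    intro h
    have : b ∈ ({a,c} : Finset V) := h ▸ (by simp)
    simp only [Finset.mem_insert, Finset.mem_singleton] at this
    tauto
  have h13 : ({a,b} : Finset V) ≠ {a,b,c} := fun h => by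
    have := congrArg Finset.card h
    rw [Finset.card_pair hab, hcard3] at this
    norm_num at this
  have h23 : ({a,c} : Finset V) ≠ {a,b,c} := fun h => by
    have := congrArg Finset.card h
    rw [Finset.card_pair hac, hcard3] at this
    norm_num at this
  have hnm : ({a,b} : Finset V) ∉ ({{a,c}, {a,b,c}} : Finset (Finset V)) := by
    simp only [Finset.mem_insert, Finset.mem_singleton]
    tauto
  rw [tau0, ← Finset.sum_subset (Finset.subset_univ S) hzero, hS,
    Finset.sum_insert hnm, Finset.sum_pair h23]
  rw [if_pos ⟨a, by simp⟩, if_pos ⟨a, by simp⟩, if_pos ⟨a, by simp⟩,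
    cc_pair _ a b hab (by simp), cc_pair _ a c hac (by simp),
    cc_triple _ a b c hab hac hbc (by simp) (by simp) (by
      simp only [Set.mem_insert_iff, Set.mem_singleton_iff, Sym2.eq_iff, not_or]
      tauto),
    Finset.card_pair hab, Finset.card_pair hac, hcard3]
  ring

/-- let `G` be the complete graph on `n` vertices minus two distinct edges
`{u,v}` and `{x,y}`. If the two deleted edges are vertex-disjoint then
`τ₀(G) = 2/((n+1)·C(n,2))`; if they share a vertex then
`τ₀(G) = (1/(n+1))·(2/C(n,2) + 1/C(n,3))`. -/
theorem tau0_complete_minus_two_edges {V : Type*} [Fintype V] [DecidableEq V]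
    (u v x y : V) (huv : u ≠ v) (hxy : x ≠ y) (hne : s(u, v) ≠ s(x, y)) :
    (Disjoint ({u, v} : Finset V) ({x, y} : Finset V) →
      tau0 ((⊤ : SimpleGraph V).deleteEdges {s(u, v), s(x, y)})
        = 2 / (((Fintype.card V : ℚ) + 1) * ((Fintype.card V).choose 2 : ℚ))) ∧
    (¬ Disjoint ({u, v} : Finset V) ({x, y} : Finset V) →
      tau0 ((⊤ : SimpleGraph V).deleteEdges {s(u, v), s(x, y)})
        = ((Fintype.card V : ℚ) + 1)⁻¹ *
            (2 / ((Fintype.card V).choose 2 : ℚ) + 1 / ((Fintype.card V).choose 3 : ℚ))) := by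
  constructor
  · intro hd
    exact tau0_disj u v x y huv hxy hd
  · intro hnd
    obtain ⟨z, hz1, hz2⟩ := Finset.not_disjoint_iff.mp hnd
    simp only [Finset.mem_insert, Finset.mem_singleton] at hz1 hz2
    rcases hz1 with h1 | h1
    · rcases hz2 with h2 | h2
      · have h : u = x := h1.symm.trans h2
        subst h
        exact tau0_shared u v y huv hxy (fun e => hne (by rw [e]))
      · have h : u = y := h1.symm.trans h2
        subst h
        rw [show s(x, u) = s(u, x) from Sym2.eq_swap]
        exact tau0_shared u v x huv hxy.symm
          (fun e => hne (by rw [e]; exact Sym2.eq_swap))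
    · rcases hz2 with h2 | h2
      · have h : v = x := h1.symm.trans h2
        subst h
        rw [show s(u, v) = s(v, u) from Sym2.eq_swap]
        exact tau0_shared v u y huv.symm hxy
          (fun e => hne (by rw [e]; exact Sym2.eq_swap))
      · have h : v = y := h1.symm.trans h2
        subst h
        rw [show s(u, v) = s(v, u) from Sym2.eq_swap,
          show s(x, v) = s(v, x) from Sym2.eq_swap]
        exact tau0_shared v u x huv.symm hxy.symm (fun e => hne (by rw [e]))
end
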